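/- Let (A, Δ, Δ') be a commutative Hopf brace with antipodes S (for Δ) and T (for Δ'); set ρ(a) = a_{(-1)} ⊗ a_{(0)} = S(a_1) a_{21'} ⊗ a_{22'} and φ(a) = a_{[0]} ⊗ a_{[1]} = (T(a_{1'}))_{(-1)} a_{2'} ⊗ (T(a_{1'}))_{(0)} a_{3'}. Then the linear map c: A ⊗ A → A ⊗ A defined by c(x ⊗ y) = x_{(-1)} y_{[0]} ⊗ x_{(0)} y_{[1]} is an invertible solution of the braid equation: (c ⊗ id)(id ⊗ c)(c ⊗ id) = (id ⊗ c)(c ⊗ id)(id ⊗ c) on A ⊗ A ⊗ A. -/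

import Mathlib

open TensorProduct

noncomputable section

namespace HopfPaper

/-- A Hopf algebra structure (comultiplication `Δ`, counit `ε`, antipode `S`) on a
given `k`-algebra `H`, expressed in terms of `k`-linear maps.  Together with the
algebra structure of `H` this is exactly the data of a Hopf algebra
`(H, m, 1, Δ, ε, S)` over the field `k`. -/
structure HopfStruct (k : Type*) [Field k] (H : Type*) [Ring H] [Algebra k H] where
  /-- the comultiplication -/
  Δ : H →ₗ[k] H ⊗[k] H
  /-- the counit -/
  ε : H →ₗ[k] k
  /-- the antipode -/
  S : H →ₗ[k] H
  coassoc : ∀ h : H,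
    TensorProduct.map (LinearMap.id : H →ₗ[k] H) Δ (Δ h)
      = TensorProduct.assoc k H H H
          (TensorProduct.map Δ (LinearMap.id : H →ₗ[k] H) (Δ h))
  counit_left : ∀ h : H,
    TensorProduct.lid k H (TensorProduct.map ε (LinearMap.id : H →ₗ[k] H) (Δ h)) = h
  counit_right : ∀ h : H,
    TensorProduct.rid k H (TensorProduct.map (LinearMap.id : H →ₗ[k] H) ε (Δ h)) = h
  comul_mul : ∀ a b : H, Δ (a * b) = Δ a * Δ b
  comul_one : Δ 1 = 1
  counit_mul : ∀ a b : H, ε (a * b) = ε a * ε b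
  counit_one : ε 1 = 1
  antipode_left : ∀ h : H,
    LinearMap.mul' k H (TensorProduct.map S (LinearMap.id : H →ₗ[k] H) (Δ h))
      = algebraMap k H (ε h)
  antipode_right : ∀ h : H,
    LinearMap.mul' k H (TensorProduct.map (LinearMap.id : H →ₗ[k] H) S (Δ h))
      = algebraMap k H (ε h)

variable (k : Type*) [Field k]

/-- `m ↦ m ⊗ 1`. -/
def ι₁ (M N : Type*) [Ring M] [Algebra k M] [Ring N] [Algebra k N] :
    M →ₗ[k] M ⊗[k] N :=
  (TensorProduct.mk k M N).flip 1

/-- `n ↦ 1 ⊗ n`. -/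
def ι₂ (M N : Type*) [Ring M] [Algebra k M] [Ring N] [Algebra k N] :
    N →ₗ[k] M ⊗[k] N :=
  TensorProduct.mk k M N 1

/-- multiplication of three factors, `x ⊗ (y ⊗ z) ↦ x * y * z`. -/
def mul₃ (T : Type*) [Ring T] [Algebra k T] : T ⊗[k] (T ⊗[k] T) →ₗ[k] T :=
  (LinearMap.mul' k T).comp
    (TensorProduct.map (LinearMap.id : T →ₗ[k] T) (LinearMap.mul' k T))

/-- multiplication of four factors. -/
def mul₄ (T : Type*) [Ring T] [Algebra k T] :
    T ⊗[k] (T ⊗[k] (T ⊗[k] T)) →ₗ[k] T :=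
  (LinearMap.mul' k T).comp
    (TensorProduct.map (LinearMap.id : T →ₗ[k] T) (mul₃ k T))

/-- The left hand side `h_{1'} ⊗ h_{2'1} ⊗ h_{2'2}` of the Hopf brace compatibility
condition (2.1), i.e. `(id ⊗ Δ) ∘ Δ'`. -/
def braceLHS (H : Type*) [Ring H] [Algebra k H] (Δ Δ' : H →ₗ[k] H ⊗[k] H) :
    H →ₗ[k] H ⊗[k] (H ⊗[k] H) :=
  (TensorProduct.map (LinearMap.id : H →ₗ[k] H) Δ).comp Δ'

/-- The right hand side `h_{11'}S(h_2)h_{31'} ⊗ h_{12'} ⊗ h_{32'}` of the Hopf brace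
compatibility condition (2.1):  it is obtained from the twofold comultiplication
`h ↦ h_1 ⊗ (h_2 ⊗ h_3)` (using `Δ`) by applying `Δ'` to the first and third legs,
`S` to the middle leg, placing the results in the appropriate tensor positions of
`H ⊗ (H ⊗ H)` (filled with `1`s) and multiplying. -/
def braceRHS (H : Type*) [Ring H] [Algebra k H] (Δ Δ' : H →ₗ[k] H ⊗[k] H)
    (S : H →ₗ[k] H) : H →ₗ[k] H ⊗[k] (H ⊗[k] H) :=
  (mul₃ k (H ⊗[k] (H ⊗[k] H))).comp
    ((TensorProduct.map
        ((TensorProduct.map (LinearMap.id : H →ₗ[k] H) (ι₁ k H H)).comp Δ')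
        (TensorProduct.map ((ι₁ k H (H ⊗[k] H)).comp S)
          ((TensorProduct.map (LinearMap.id : H →ₗ[k] H) (ι₂ k H H)).comp Δ'))).comp
      ((TensorProduct.map (LinearMap.id : H →ₗ[k] H) Δ).comp Δ))

/-- A Hopf brace on the `k`-algebra `H` : two Hopf algebra structures sharing the
multiplication and unit of `H`, subject to the compatibility condition (2.1):
`h_{1'} ⊗ h_{2'1} ⊗ h_{2'2} = h_{11'}S(h_2)h_{31'} ⊗ h_{12'} ⊗ h_{32'}`. -/
structure HopfBrace (H : Type*) [Ring H] [Algebra k H] where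
  fst : HopfStruct k H
  snd : HopfStruct k H
  compat : ∀ h : H,
    braceLHS k H fst.Δ snd.Δ h = braceRHS k H fst.Δ snd.Δ fst.S h

/-- The coaction `ρ(h) = S(h_1) h_{21'} ⊗ h_{22'}` of Lemma 2.5. -/
def ρmap (H : Type*) [Ring H] [Algebra k H] (Δ Δ' : H →ₗ[k] H ⊗[k] H)
    (S : H →ₗ[k] H) : H →ₗ[k] H ⊗[k] H :=
  (LinearMap.mul' k (H ⊗[k] H)).comp
    ((TensorProduct.map ((ι₁ k H H).comp S) Δ').comp Δ)

/-- The coaction `φ(a) = (T(a_{1'}))_{(-1)} a_{2'} ⊗ (T(a_{1'}))_{(0)} a_{3'}`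
of Lemma 2.8(2), where `x_{(-1)} ⊗ x_{(0)} = ρ(x)`. -/
def φmap (H : Type*) [Ring H] [Algebra k H] (Δ Δ' : H →ₗ[k] H ⊗[k] H)
    (S T : H →ₗ[k] H) : H →ₗ[k] H ⊗[k] H :=
  (LinearMap.mul' k (H ⊗[k] H)).comp
    ((TensorProduct.map ((ρmap k H Δ Δ' S).comp T)
        (LinearMap.id : H ⊗[k] H →ₗ[k] H ⊗[k] H)).comp
      ((TensorProduct.map (LinearMap.id : H →ₗ[k] H) Δ').comp Δ'))

/-- `ρ : A →ₗ H ⊗ A` is a coassociative counital left coaction of the coalgebra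
`(H, ΔH, εH)`. -/
def LeftCoaction (A H : Type*) [Ring A] [Algebra k A] [Ring H] [Algebra k H]
    (ΔH : H →ₗ[k] H ⊗[k] H) (εH : H →ₗ[k] k) (ρ : A →ₗ[k] H ⊗[k] A) : Prop :=
  (∀ a : A,
    TensorProduct.map (LinearMap.id : H →ₗ[k] H) ρ (ρ a)
      = TensorProduct.assoc k H H A
          (TensorProduct.map ΔH (LinearMap.id : A →ₗ[k] A) (ρ a))) ∧
  (∀ a : A,
    TensorProduct.lid k A (TensorProduct.map εH (LinearMap.id : A →ₗ[k] A) (ρ a)) = a)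

/-- `φ : H →ₗ H ⊗ A` is a coassociative counital right coaction of the coalgebra
`(A, ΔA, εA)`. -/
def RightCoaction (A H : Type*) [Ring A] [Algebra k A] [Ring H] [Algebra k H]
    (ΔA : A →ₗ[k] A ⊗[k] A) (εA : A →ₗ[k] k) (φ : H →ₗ[k] H ⊗[k] A) : Prop :=
  (∀ h : H,
    TensorProduct.map (LinearMap.id : H →ₗ[k] H) ΔA (φ h)
      = TensorProduct.assoc k H A A
          (TensorProduct.map φ (LinearMap.id : A →ₗ[k] A) (φ h))) ∧
  (∀ h : H,
    TensorProduct.rid k H (TensorProduct.map (LinearMap.id : H →ₗ[k] H) εA (φ h)) = h)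

/-- a linear map which is moreover multiplicative and unital. -/
def IsAlgebraMorphism (M N : Type*) [Ring M] [Algebra k M] [Ring N] [Algebra k N]
    (f : M →ₗ[k] N) : Prop :=
  (∀ a b : M, f (a * b) = f a * f b) ∧ f 1 = 1

/-- `a ↦ a_{1(-1)} a_{2(-1)} ⊗ a_{1(0)} ⊗ a_{2(0)}`, the right hand side of the
comodule coalgebra condition. -/
def comodCoalgRHS (A H : Type*) [Ring A] [Algebra k A] [Ring H] [Algebra k H]
    (ΔA : A →ₗ[k] A ⊗[k] A) (ρ : A →ₗ[k] H ⊗[k] A) :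
    A →ₗ[k] H ⊗[k] (A ⊗[k] A) :=
  (LinearMap.mul' k (H ⊗[k] (A ⊗[k] A))).comp
    ((TensorProduct.map
        ((TensorProduct.map (LinearMap.id : H →ₗ[k] H) (ι₁ k A A)).comp ρ)
        ((TensorProduct.map (LinearMap.id : H →ₗ[k] H) (ι₂ k A A)).comp ρ)).comp ΔA)

/-- The two conditions making a left `H`-comodule `(A, ρ)` a comodule coalgebra:
`a_{(-1)} ⊗ Δ(a_{(0)}) = a_{1(-1)} a_{2(-1)} ⊗ a_{1(0)} ⊗ a_{2(0)}` and
`a_{(-1)} ε(a_{(0)}) = ε(a) 1`. -/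
def IsComodCoalg (A H : Type*) [Ring A] [Algebra k A] [Ring H] [Algebra k H]
    (ΔA : A →ₗ[k] A ⊗[k] A) (εA : A →ₗ[k] k) (ρ : A →ₗ[k] H ⊗[k] A) : Prop :=
  (∀ a : A,
    TensorProduct.map (LinearMap.id : H →ₗ[k] H) ΔA (ρ a)
      = comodCoalgRHS k A H ΔA ρ a) ∧
  (∀ a : A,
    TensorProduct.rid k H (TensorProduct.map (LinearMap.id : H →ₗ[k] H) εA (ρ a))
      = algebraMap k H (εA a))

/-- `a ↦ a_{1(-1)} a_{2(-1)[0]} ⊗ a_{1(0)} a_{2(-1)[1]} ⊗ a_{2(0)}`, the right hand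
side of (HM2). -/
def HM2RHS (A H : Type*) [Ring A] [Algebra k A] [Ring H] [Algebra k H]
    (ΔA : A →ₗ[k] A ⊗[k] A) (ρ : A →ₗ[k] H ⊗[k] A) (φ : H →ₗ[k] H ⊗[k] A) :
    A →ₗ[k] H ⊗[k] (A ⊗[k] A) :=
  (LinearMap.mul' k (H ⊗[k] (A ⊗[k] A))).comp
    ((TensorProduct.map
        ((TensorProduct.map (LinearMap.id : H →ₗ[k] H) (ι₁ k A A)).comp ρ)
        ((TensorProduct.assoc k H A A).toLinearMap.comp
          ((TensorProduct.map φ (LinearMap.id : A →ₗ[k] A)).comp ρ))).comp ΔA)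

/-- `h ↦ h_{1[0]} ⊗ h_{1[1](-1)} h_{2[0]} ⊗ h_{1[1](0)} h_{2[1]}`, the right hand
side of (HM3). -/
def HM3RHS (A H : Type*) [Ring A] [Algebra k A] [Ring H] [Algebra k H]
    (ΔH : H →ₗ[k] H ⊗[k] H) (ρ : A →ₗ[k] H ⊗[k] A) (φ : H →ₗ[k] H ⊗[k] A) :
    H →ₗ[k] H ⊗[k] (H ⊗[k] A) :=
  (LinearMap.mul' k (H ⊗[k] (H ⊗[k] A))).comp
    ((TensorProduct.map
        ((TensorProduct.map (LinearMap.id : H →ₗ[k] H) ρ).comp φ)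
        ((ι₂ k H (H ⊗[k] A)).comp φ)).comp ΔH)

/-- A Hopf matched pair `(A, H)` (Definition 3.1): `ρ` makes `A` a left
`H`-comodule algebra, `φ` makes `H` a right `A`-comodule algebra, and the
compatibility conditions (HM1)–(HM4) hold. -/
def IsHopfMatchedPair (A H : Type*) [Ring A] [Algebra k A] [Ring H] [Algebra k H]
    (ΔA : A →ₗ[k] A ⊗[k] A) (εA : A →ₗ[k] k)
    (ΔH : H →ₗ[k] H ⊗[k] H) (εH : H →ₗ[k] k)
    (ρ : A →ₗ[k] H ⊗[k] A) (φ : H →ₗ[k] H ⊗[k] A) : Prop :=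
  LeftCoaction k A H ΔH εH ρ ∧
  IsAlgebraMorphism k A (H ⊗[k] A) ρ ∧
  RightCoaction k A H ΔA εA φ ∧
  IsAlgebraMorphism k H (H ⊗[k] A) φ ∧
  -- (HM1)
  (∀ a : A,
    TensorProduct.rid k H (TensorProduct.map (LinearMap.id : H →ₗ[k] H) εA (ρ a))
      = algebraMap k H (εA a)) ∧
  (∀ h : H,
    TensorProduct.lid k A (TensorProduct.map εH (LinearMap.id : A →ₗ[k] A) (φ h))
      = algebraMap k A (εH h)) ∧
  -- (HM2)
  (∀ a : A,
    TensorProduct.map (LinearMap.id : H →ₗ[k] H) ΔA (ρ a) = HM2RHS k A H ΔA ρ φ a) ∧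
  -- (HM3)
  (∀ h : H,
    TensorProduct.assoc k H H A
        (TensorProduct.map ΔH (LinearMap.id : A →ₗ[k] A) (φ h))
      = HM3RHS k A H ΔH ρ φ h) ∧
  -- (HM4)
  (∀ (a : A) (h : H), φ h * ρ a = ρ a * φ h)

/-- Equation (3.2): `Δ(a) = a_{1'} T(a_{2'(-1)}) ⊗ a_{2'(0)}`. -/
def Δfromρ (A : Type*) [Ring A] [Algebra k A] (Δ' : A →ₗ[k] A ⊗[k] A)
    (T : A →ₗ[k] A) (ρ : A →ₗ[k] A ⊗[k] A) : A →ₗ[k] A ⊗[k] A :=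
  (LinearMap.mul' k (A ⊗[k] A)).comp
    ((TensorProduct.map (ι₁ k A A)
        ((TensorProduct.map T (LinearMap.id : A →ₗ[k] A)).comp ρ)).comp Δ')

/-- Equation (3.3): `S(a) = a_{(-1)} T(a_{(0)})`. -/
def Sfromρ (A : Type*) [Ring A] [Algebra k A] (T : A →ₗ[k] A)
    (ρ : A →ₗ[k] A ⊗[k] A) : A →ₗ[k] A :=
  (LinearMap.mul' k A).comp
    ((TensorProduct.map (LinearMap.id : A →ₗ[k] A) T).comp ρ)

/-- The comultiplication `Δ_R(h) = R · Δ(h) · R⁻¹` obtained by conjugating `Δ` with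
an invertible element `R ∈ H ⊗ H`. -/
def conjComul (H : Type*) [Ring H] [Algebra k H] (R Rinv : H ⊗[k] H)
    (Δ : H →ₗ[k] H ⊗[k] H) : H →ₗ[k] H ⊗[k] H :=
  (LinearMap.mulLeft k R).comp ((LinearMap.mulRight k Rinv).comp Δ)

/-- The braiding candidate `c(x ⊗ y) = x_{(-1)} y_{[0]} ⊗ x_{(0)} y_{[1]}` of
Proposition 2.9, i.e. `c = mult ∘ (ρ ⊗ φ)`. -/
def cmap (A : Type*) [Ring A] [Algebra k A] (Δ Δ' : A →ₗ[k] A ⊗[k] A)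
    (S T : A →ₗ[k] A) : A ⊗[k] A →ₗ[k] A ⊗[k] A :=
  (LinearMap.mul' k (A ⊗[k] A)).comp
    (TensorProduct.map (ρmap k A Δ Δ' S) (φmap k A Δ Δ' S T))

/-- `γ(x ⊗ y) = x y_{(-1)} ⊗ y_{(0)}` for a coaction `ρ(y) = y_{(-1)} ⊗ y_{(0)}`. -/
def γmap (A : Type*) [Ring A] [Algebra k A] (ρ : A →ₗ[k] A ⊗[k] A) :
    A ⊗[k] A →ₗ[k] A ⊗[k] A :=
  (LinearMap.mul' k (A ⊗[k] A)).comp (TensorProduct.map (ι₁ k A A) ρ)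

/-- `σ(x ⊗ y) = y_2 ⊗ x S(y_1) y_3`. -/
def σmap (A : Type*) [Ring A] [Algebra k A] (Δ : A →ₗ[k] A ⊗[k] A)
    (S : A →ₗ[k] A) : A ⊗[k] A →ₗ[k] A ⊗[k] A :=
  (mul₄ k (A ⊗[k] A)).comp
    ((TensorProduct.map (ι₂ k A A)
        (TensorProduct.map ((ι₂ k A A).comp S)
          (TensorProduct.map (ι₁ k A A) (ι₂ k A A)))).comp
      (TensorProduct.map (LinearMap.id : A →ₗ[k] A)
        ((TensorProduct.map (LinearMap.id : A →ₗ[k] A) Δ).comp Δ)))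

/-- The usual tensor product comultiplication `Δ̂` on `A ⊗ H`:
`a ⊗ h ↦ (a_1 ⊗ h_1) ⊗ (a_2 ⊗ h_2)`. -/
def hatΔ (A H : Type*) [Ring A] [Algebra k A] [Ring H] [Algebra k H]
    (ΔA : A →ₗ[k] A ⊗[k] A) (ΔH : H →ₗ[k] H ⊗[k] H) :
    A ⊗[k] H →ₗ[k] (A ⊗[k] H) ⊗[k] (A ⊗[k] H) :=
  (TensorProduct.tensorTensorTensorComm k A A H H).toLinearMap.comp
    (TensorProduct.map ΔA ΔH)

/-- The bicrossed coproduct comultiplication on `A ⊗ H`: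
`Δ̃(a ⊗ h) = a_1 ⊗ a_{2(-1)} h_{1[0]} ⊗ a_{2(0)} h_{1[1]} ⊗ h_2`. -/
def bicrossΔ (A H : Type*) [Ring A] [Algebra k A] [Ring H] [Algebra k H]
    (ΔA : A →ₗ[k] A ⊗[k] A) (ΔH : H →ₗ[k] H ⊗[k] H)
    (ρ : A →ₗ[k] H ⊗[k] A) (φ : H →ₗ[k] H ⊗[k] A) :
    A ⊗[k] H →ₗ[k] (A ⊗[k] H) ⊗[k] (A ⊗[k] H) :=
  (LinearMap.mul' k ((A ⊗[k] H) ⊗[k] (A ⊗[k] H))).comp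
    (TensorProduct.map
      -- a ↦ (a_1 ⊗ a_{2(-1)}) ⊗ (a_{2(0)} ⊗ 1)
      ((TensorProduct.map (LinearMap.id : A ⊗[k] H →ₗ[k] A ⊗[k] H) (ι₁ k A H)).comp
        ((TensorProduct.assoc k A H A).symm.toLinearMap.comp
          ((TensorProduct.map (LinearMap.id : A →ₗ[k] A) ρ).comp ΔA)))
      -- h ↦ (1 ⊗ h_{1[0]}) ⊗ (h_{1[1]} ⊗ h_2)
      ((TensorProduct.map (ι₂ k A H) (LinearMap.id : A ⊗[k] H →ₗ[k] A ⊗[k] H)).comp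
        ((TensorProduct.assoc k H A H).toLinearMap.comp
          ((TensorProduct.map φ (LinearMap.id : H →ₗ[k] H)).comp ΔH))))

/-- The antipode of the bicrossed coproduct:
`S̃(a ⊗ h) = S_A(h_{[1]}) S_A(a_{(0)}) ⊗ S_H(h_{[0]}) S_H(a_{(-1)})`. -/
def bicrossS (A H : Type*) [Ring A] [Algebra k A] [Ring H] [Algebra k H]
    (SA : A →ₗ[k] A) (SH : H →ₗ[k] H)
    (ρ : A →ₗ[k] H ⊗[k] A) (φ : H →ₗ[k] H ⊗[k] A) :
    A ⊗[k] H →ₗ[k] A ⊗[k] H :=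
  (LinearMap.mul' k (A ⊗[k] H)).comp
    ((TensorProduct.map
        ((TensorProduct.map SA SH).comp ((TensorProduct.comm k H A).toLinearMap.comp φ))
        ((TensorProduct.map SA SH).comp ((TensorProduct.comm k H A).toLinearMap.comp ρ))).comp
      (TensorProduct.comm k A H).toLinearMap)

/-- The left hand side `h_{[0]} ⊗ h_{[1]1} ⊗ h_{[1]2}` of equation (4.1), where the
`A`-leg is comultiplied with `Δ'`. -/
def eq41LHS (A H : Type*) [Ring A] [Algebra k A] [Ring H] [Algebra k H]
    (Δ'A : A →ₗ[k] A ⊗[k] A) (φ : H →ₗ[k] H ⊗[k] A) :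
    H →ₗ[k] H ⊗[k] (A ⊗[k] A) :=
  (TensorProduct.map (LinearMap.id : H →ₗ[k] H) Δ'A).comp φ

/-- The right hand side `h_{1[0]} S(h_2) h_{3[0]} ⊗ h_{1[1]} ⊗ h_{3[1]}` of
equation (4.1). -/
def eq41RHS (A H : Type*) [Ring A] [Algebra k A] [Ring H] [Algebra k H]
    (ΔH : H →ₗ[k] H ⊗[k] H) (SH : H →ₗ[k] H) (φ : H →ₗ[k] H ⊗[k] A) :
    H →ₗ[k] H ⊗[k] (A ⊗[k] A) :=
  (mul₃ k (H ⊗[k] (A ⊗[k] A))).comp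
    ((TensorProduct.map
        ((TensorProduct.map (LinearMap.id : H →ₗ[k] H) (ι₁ k A A)).comp φ)
        (TensorProduct.map ((ι₁ k H (A ⊗[k] A)).comp SH)
          ((TensorProduct.map (LinearMap.id : H →ₗ[k] H) (ι₂ k A A)).comp φ))).comp
      ((TensorProduct.map (LinearMap.id : H →ₗ[k] H) ΔH).comp ΔH))

/-- `x ↦ x_{11'} S(x_2) ⊗ x_{12'} ⊗ 1 ∈ H ⊗ (H ⊗ A)`, an auxiliary map for
equations (4.2) and (4.3). -/
def LHmap (A H : Type*) [Ring A] [Algebra k A] [Ring H] [Algebra k H]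
    (ΔH Δ'H : H →ₗ[k] H ⊗[k] H) (SH : H →ₗ[k] H) :
    H →ₗ[k] H ⊗[k] (H ⊗[k] A) :=
  (LinearMap.mul' k (H ⊗[k] (H ⊗[k] A))).comp
    ((TensorProduct.map
        ((TensorProduct.map (LinearMap.id : H →ₗ[k] H) (ι₁ k H A)).comp Δ'H)
        ((ι₁ k H (H ⊗[k] A)).comp SH)).comp ΔH)

/-- The right hand side
`a_{(-1)11'} S(a_{(-1)2}) a_{(0)(-1)'} ⊗ a_{(-1)12'} ⊗ a_{(0)(0)'}` of
equation (4.2). -/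
def eq42RHS (A H : Type*) [Ring A] [Algebra k A] [Ring H] [Algebra k H]
    (ΔH Δ'H : H →ₗ[k] H ⊗[k] H) (SH : H →ₗ[k] H)
    (ρ ρ' : A →ₗ[k] H ⊗[k] A) :
    A →ₗ[k] H ⊗[k] (H ⊗[k] A) :=
  (LinearMap.mul' k (H ⊗[k] (H ⊗[k] A))).comp
    ((TensorProduct.map (LHmap k A H ΔH Δ'H SH)
        ((TensorProduct.map (LinearMap.id : H →ₗ[k] H) (ι₂ k H A)).comp ρ')).comp ρ)

/-- The right hand side
`h_{1[0]11'} S(h_{1[0]2}) h_{1[1](-1)'} h_2 ⊗ h_{1[0]12'} ⊗ h_{1[1](0)'}` of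
equation (4.3). -/
def eq43RHS (A H : Type*) [Ring A] [Algebra k A] [Ring H] [Algebra k H]
    (ΔH Δ'H : H →ₗ[k] H ⊗[k] H) (SH : H →ₗ[k] H)
    (ρ' : A →ₗ[k] H ⊗[k] A) (φ : H →ₗ[k] H ⊗[k] A) :
    H →ₗ[k] H ⊗[k] (H ⊗[k] A) :=
  (LinearMap.mul' k (H ⊗[k] (H ⊗[k] A))).comp
    ((TensorProduct.map
        ((LinearMap.mul' k (H ⊗[k] (H ⊗[k] A))).comp
          ((TensorProduct.map (LHmap k A H ΔH Δ'H SH)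
              ((TensorProduct.map (LinearMap.id : H →ₗ[k] H) (ι₂ k H A)).comp ρ')).comp φ))
        (ι₁ k H (H ⊗[k] A))).comp ΔH)


open TensorProduct



/-! ### Generic utilities -/

section Utils

variable {k}
variable {M N R S C : Type*}
  [Ring M] [Algebra k M] [Ring N] [Algebra k N] [Ring R] [Algebra k R]
  [Ring S] [Algebra k S] [Ring C] [Algebra k C]

@[simp] lemma ι₁_apply (m : M) : ι₁ k M N m = m ⊗ₜ[k] 1 := rfl
@[simp] lemma ι₂_apply (n : N) : ι₂ k M N n = (1 : M) ⊗ₜ[k] n := rfl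

lemma mul_induction (f : M ⊗[k] N →ₗ[k] R)
    (h : ∀ (m m' : M) (n n' : N),
      f ((m * m') ⊗ₜ (n * n')) = f (m ⊗ₜ n) * f (m' ⊗ₜ n')) :
    ∀ u v : M ⊗[k] N, f (u * v) = f u * f v := by
  intro u v
  induction u using TensorProduct.induction_on with
  | zero => simp
  | tmul m n =>
    induction v using TensorProduct.induction_on with
    | zero => simp
    | tmul m' n' => simpa [Algebra.TensorProduct.tmul_mul_tmul] using h m m' n n'
    | add x y hx hy => simp [mul_add, hx, hy]
  | add x y hx hy => simp [add_mul, hx, hy]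

lemma isAlgMor_comp {f : M →ₗ[k] N} {g : N →ₗ[k] R}
    (hf : IsAlgebraMorphism k M N f) (hg : IsAlgebraMorphism k N R g) :
    IsAlgebraMorphism k M R (g ∘ₗ f) :=
  ⟨fun a b => by simp [hf.1, hg.1], by simp [hf.2, hg.2]⟩

lemma isAlgMor_map {f : M →ₗ[k] R} {g : N →ₗ[k] S}
    (hf : IsAlgebraMorphism k M R f) (hg : IsAlgebraMorphism k N S g) :
    IsAlgebraMorphism k (M ⊗[k] N) (R ⊗[k] S) (TensorProduct.map f g) := by
  constructor
  · exact mul_induction _ fun m m' n n' => by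
      simp [hf.1, hg.1, Algebra.TensorProduct.tmul_mul_tmul]
  · simp [Algebra.TensorProduct.one_def, hf.2, hg.2]

lemma isAlgMor_mul' (hR : ∀ u v : R, u * v = v * u) :
    IsAlgebraMorphism k (R ⊗[k] R) R (LinearMap.mul' k R) := by
  constructor
  · exact mul_induction _ fun m m' n n' => by
      simp only [LinearMap.mul'_apply]
      rw [mul_assoc, ← mul_assoc m' n, hR m' n, mul_assoc n, ← mul_assoc]
  · simp [Algebra.TensorProduct.one_def]

lemma isAlgMor_ι₁ : IsAlgebraMorphism k M (M ⊗[k] N) (ι₁ k M N) :=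
  ⟨fun a b => by simp [Algebra.TensorProduct.tmul_mul_tmul],
   by simp [Algebra.TensorProduct.one_def]⟩

lemma isAlgMor_ι₂ : IsAlgebraMorphism k N (M ⊗[k] N) (ι₂ k M N) :=
  ⟨fun a b => by simp [Algebra.TensorProduct.tmul_mul_tmul],
   by simp [Algebra.TensorProduct.one_def]⟩

lemma isAlgMor_algebraMap :
    IsAlgebraMorphism k k R (Algebra.linearMap k R) :=
  ⟨fun a b => by simp, by simp⟩

lemma isAlgMor_algebraMap_comp {f : M →ₗ[k] R} (hf : IsAlgebraMorphism k M R f)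
    (c : k) : f (algebraMap k M c) = algebraMap k R c := by
  rw [Algebra.algebraMap_eq_smul_one, map_smul, hf.2, Algebra.algebraMap_eq_smul_one]

lemma isAlgMor_assoc :
    IsAlgebraMorphism k ((M ⊗[k] N) ⊗[k] R) (M ⊗[k] (N ⊗[k] R))
      (TensorProduct.assoc k M N R).toLinearMap := by
  constructor
  · refine mul_induction _ fun x x' z z' => ?_
    induction x using TensorProduct.induction_on with
    | zero => simp only [zero_mul, zero_tmul, map_zero]
    | tmul a b =>
      induction x' using TensorProduct.induction_on with
      | zero => simp only [mul_zero, zero_tmul, map_zero]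
      | tmul a' b' =>
        simp only [Algebra.TensorProduct.tmul_mul_tmul, LinearEquiv.coe_coe,
          TensorProduct.assoc_tmul]
      | add u v hu hv =>
        simp only [mul_add, add_tmul, map_add, hu, hv]
    | add u v hu hv =>
      simp only [add_mul, add_tmul, map_add, hu, hv]
  · simp only [Algebra.TensorProduct.one_def, LinearEquiv.coe_coe,
      TensorProduct.assoc_tmul]

lemma isAlgMor_assoc_symm :
    IsAlgebraMorphism k (M ⊗[k] (N ⊗[k] R)) ((M ⊗[k] N) ⊗[k] R)
      (TensorProduct.assoc k M N R).symm.toLinearMap := by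
  have h := isAlgMor_assoc (k := k) (M := M) (N := N) (R := R)
  constructor
  · intro u v
    apply (TensorProduct.assoc k M N R).injective
    show (TensorProduct.assoc k M N R).toLinearMap _ = (TensorProduct.assoc k M N R).toLinearMap _
    rw [h.1]
    show _ = ((TensorProduct.assoc k M N R) ((TensorProduct.assoc k M N R).symm _)) * ((TensorProduct.assoc k M N R) ((TensorProduct.assoc k M N R).symm _))
    rw [LinearEquiv.apply_symm_apply, LinearEquiv.apply_symm_apply]
    show (TensorProduct.assoc k M N R) ((TensorProduct.assoc k M N R).symm (u*v)) = _
    rw [LinearEquiv.apply_symm_apply]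
  · apply (TensorProduct.assoc k M N R).injective
    show (TensorProduct.assoc k M N R) ((TensorProduct.assoc k M N R).symm 1) = (TensorProduct.assoc k M N R).toLinearMap 1
    rw [LinearEquiv.apply_symm_apply, h.2]

/-- postcomposition of a multiplicative map past `mul'`. -/
lemma mult_mul' {f : M →ₗ[k] R} (hf : ∀ a b : M, f (a * b) = f a * f b) :
    f ∘ₗ LinearMap.mul' k M = LinearMap.mul' k R ∘ₗ TensorProduct.map f f := by
  apply TensorProduct.ext'
  intro u v
  simp [hf]

end Utils

/-! ### Generic convolution -/

section Conv

variable {k}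
variable {C R : Type*} [Ring C] [Algebra k C] [Ring R] [Algebra k R]

/-- convolution of two linear maps with respect to a comultiplication `D`. -/
def conv (D : C →ₗ[k] C ⊗[k] C) (f g : C →ₗ[k] R) : C →ₗ[k] R :=
  LinearMap.mul' k R ∘ₗ TensorProduct.map f g ∘ₗ D

lemma conv_apply (D : C →ₗ[k] C ⊗[k] C) (f g : C →ₗ[k] R) (x : C) :
    conv D f g x = LinearMap.mul' k R (TensorProduct.map f g (D x)) := rfl

lemma conv_assoc (D : C →ₗ[k] C ⊗[k] C)
    (hD : ∀ x : C, TensorProduct.map LinearMap.id D (D x)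
      = TensorProduct.assoc k C C C (TensorProduct.map D LinearMap.id (D x)))
    (f g h : C →ₗ[k] R) :
    conv D (conv D f g) h = conv D f (conv D g h) := by
  have key : (LinearMap.mul' k R ∘ₗ TensorProduct.map (LinearMap.mul' k R) h
        ∘ₗ TensorProduct.map (TensorProduct.map f g) LinearMap.id)
        ∘ₗ (TensorProduct.assoc k C C C).symm.toLinearMap
      = LinearMap.mul' k R ∘ₗ TensorProduct.map f (LinearMap.mul' k R)
        ∘ₗ TensorProduct.map LinearMap.id (TensorProduct.map g h) := by
    apply TensorProduct.ext'
    intro a w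
    induction w using TensorProduct.induction_on with
    | zero => rw [tmul_zero, map_zero, map_zero]
    | tmul b c =>
      simp only [LinearMap.comp_apply, LinearEquiv.coe_coe,
        TensorProduct.assoc_symm_tmul, TensorProduct.map_tmul,
        LinearMap.mul'_apply, LinearMap.id_coe, id_eq, mul_assoc]
    | add u v hu hv => rw [tmul_add, map_add, map_add, hu, hv]
  apply LinearMap.ext; intro x
  have e1 : TensorProduct.map (conv D f g) h
      = (TensorProduct.map (LinearMap.mul' k R) h
          ∘ₗ TensorProduct.map (TensorProduct.map f g) LinearMap.id)
        ∘ₗ TensorProduct.map D LinearMap.id := by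
    rw [← TensorProduct.map_comp, ← TensorProduct.map_comp]; rfl
  have e2 : TensorProduct.map f (conv D g h)
      = (TensorProduct.map f (LinearMap.mul' k R)
          ∘ₗ TensorProduct.map LinearMap.id (TensorProduct.map g h))
        ∘ₗ TensorProduct.map LinearMap.id D := by
    rw [← TensorProduct.map_comp, ← TensorProduct.map_comp]; rfl
  have hDx : TensorProduct.map D LinearMap.id (D x)
      = (TensorProduct.assoc k C C C).symm (TensorProduct.map LinearMap.id D (D x)) := by
    rw [hD x]; simp
  rw [conv_apply, conv_apply, e1, e2]
  simp only [LinearMap.comp_apply]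
  rw [hDx]
  exact LinearMap.congr_fun key ((TensorProduct.map LinearMap.id D) (D x))

lemma conv_one_right (D : C →ₗ[k] C ⊗[k] C) (e : C →ₗ[k] k)
    (hco : ∀ x : C, TensorProduct.rid k C (TensorProduct.map LinearMap.id e (D x)) = x)
    (f : C →ₗ[k] R) :
    conv D f (Algebra.linearMap k R ∘ₗ e) = f := by
  have key : LinearMap.mul' k R ∘ₗ TensorProduct.map f (Algebra.linearMap k R)
      = f ∘ₗ (TensorProduct.rid k C).toLinearMap := by
    apply TensorProduct.ext'
    intro a c
    simp [Algebra.algebraMap_eq_smul_one, mul_smul_comm]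
  apply LinearMap.ext; intro x
  have e1 : TensorProduct.map f (Algebra.linearMap k R ∘ₗ e)
      = (TensorProduct.map f (Algebra.linearMap k R))
        ∘ₗ TensorProduct.map LinearMap.id e := by
    rw [← TensorProduct.map_comp]; rfl
  rw [conv_apply, e1]
  simp only [LinearMap.comp_apply]
  rw [← LinearMap.comp_apply (LinearMap.mul' k R), key]
  simp only [LinearMap.comp_apply, LinearEquiv.coe_coe]
  rw [hco x]

lemma conv_one_left (D : C →ₗ[k] C ⊗[k] C) (e : C →ₗ[k] k)
    (hco : ∀ x : C, TensorProduct.lid k C (TensorProduct.map e LinearMap.id (D x)) = x)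
    (f : C →ₗ[k] R) :
    conv D (Algebra.linearMap k R ∘ₗ e) f = f := by
  have key : LinearMap.mul' k R ∘ₗ TensorProduct.map (Algebra.linearMap k R) f
      = f ∘ₗ (TensorProduct.lid k C).toLinearMap := by
    apply TensorProduct.ext'
    intro c a
    simp [Algebra.algebraMap_eq_smul_one, smul_mul_assoc]
  apply LinearMap.ext; intro x
  have e1 : TensorProduct.map (Algebra.linearMap k R ∘ₗ e) f
      = (TensorProduct.map (Algebra.linearMap k R) f)
        ∘ₗ TensorProduct.map e LinearMap.id := by
    rw [← TensorProduct.map_comp]; rfl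
  rw [conv_apply, e1]
  simp only [LinearMap.comp_apply]
  rw [← LinearMap.comp_apply (LinearMap.mul' k R), key]
  simp only [LinearMap.comp_apply, LinearEquiv.coe_coe]
  rw [hco x]

lemma conv_isAlgMor (D : C →ₗ[k] C ⊗[k] C)
    (hDm : ∀ a b : C, D (a * b) = D a * D b) (hD1 : D 1 = 1)
    (hR : ∀ u v : R, u * v = v * u)
    {f g : C →ₗ[k] R} (hf : IsAlgebraMorphism k C R f) (hg : IsAlgebraMorphism k C R g) :
    IsAlgebraMorphism k C R (conv D f g) := by
  constructor
  · intro a b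
    rw [conv_apply, conv_apply, conv_apply, hDm,
      (isAlgMor_map hf hg).1, (isAlgMor_mul' hR).1]
  · rw [conv_apply, hD1, (isAlgMor_map hf hg).2, (isAlgMor_mul' hR).2]

lemma conv_postcomp (D : C →ₗ[k] C ⊗[k] C) {R' : Type*} [Ring R'] [Algebra k R']
    (N : R →ₗ[k] R') (hN : ∀ u v : R, N (u * v) = N u * N v)
    (f g : C →ₗ[k] R) :
    N ∘ₗ conv D f g = conv D (N ∘ₗ f) (N ∘ₗ g) := by
  apply LinearMap.ext; intro x
  simp only [LinearMap.comp_apply, conv_apply]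
  rw [← LinearMap.comp_apply N, mult_mul' hN]
  simp only [LinearMap.comp_apply]
  rw [← LinearMap.comp_apply (TensorProduct.map N N), ← TensorProduct.map_comp]

end Conv


open TensorProduct



section ExtHelpers

variable {k : Type*} [Field k]
variable {M1 M2 M3 M4 M5 M6 Q : Type*}
  [AddCommMonoid M1] [AddCommMonoid M2] [AddCommMonoid M3] [AddCommMonoid M4]
  [AddCommMonoid M5] [AddCommMonoid M6] [AddCommMonoid Q]
  [Module k M1] [Module k M2] [Module k M3] [Module k M4] [Module k M5] [Module k M6]
  [Module k Q]

lemma ext_sixfold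
    {f g : (M1 ⊗[k] (M2 ⊗[k] M3)) ⊗[k] (M4 ⊗[k] (M5 ⊗[k] M6)) →ₗ[k] Q}
    (h : ∀ (a : M1) (b : M2) (c : M3) (d : M4) (e : M5) (f' : M6),
      f ((a ⊗ₜ (b ⊗ₜ c)) ⊗ₜ (d ⊗ₜ (e ⊗ₜ f')))
        = g ((a ⊗ₜ (b ⊗ₜ c)) ⊗ₜ (d ⊗ₜ (e ⊗ₜ f')))) :
    f = g := by
  apply TensorProduct.ext'
  intro u v
  induction u using TensorProduct.induction_on with
  | zero => simp only [zero_tmul, map_zero]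
  | add u1 u2 h1 h2 => rw [add_tmul, map_add, map_add, h1, h2]
  | tmul a y =>
    induction y using TensorProduct.induction_on with
    | zero => simp only [tmul_zero, zero_tmul, map_zero]
    | add y1 y2 h1 h2 => rw [tmul_add, add_tmul, map_add, map_add, h1, h2]
    | tmul b c =>
      induction v using TensorProduct.induction_on with
      | zero => simp only [tmul_zero, map_zero]
      | add v1 v2 h1 h2 => rw [tmul_add, map_add, map_add, h1, h2]
      | tmul d w =>
        induction w using TensorProduct.induction_on with
        | zero => simp only [tmul_zero, map_zero]
        | add w1 w2 h1 h2 => rw [tmul_add, tmul_add, map_add, map_add, h1, h2]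
        | tmul e f' => exact h a b c d e f'

end ExtHelpers

lemma mul_exchange {R : Type*} [Ring R] (hR : ∀ u v : R, u * v = v * u)
    (p q r s : R) : (p * q) * (r * s) = (p * r) * (q * s) := by
  rw [mul_assoc, ← mul_assoc q r s, hR q r, mul_assoc r q s, ← mul_assoc]

section Hopf

variable {k A : Type*} [Field k] [Ring A] [Algebra k A] (Hs : HopfStruct k A)

lemma hopf_S_one : Hs.S 1 = 1 := by
  have h := Hs.antipode_left 1
  rw [Hs.comul_one, Algebra.TensorProduct.one_def, TensorProduct.map_tmul,
    LinearMap.mul'_apply, Hs.counit_one] at h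
  simpa using h

lemma counitR_comp :
    TensorProduct.map LinearMap.id Hs.ε ∘ₗ Hs.Δ
      = (TensorProduct.rid k A).symm.toLinearMap := by
  apply LinearMap.ext; intro x
  apply (TensorProduct.rid k A).injective
  simp only [LinearMap.comp_apply, LinearEquiv.coe_coe, LinearEquiv.apply_symm_apply]
  exact Hs.counit_right x

lemma counitL_comp :
    TensorProduct.map Hs.ε LinearMap.id ∘ₗ Hs.Δ
      = (TensorProduct.lid k A).symm.toLinearMap := by
  apply LinearMap.ext; intro x
  apply (TensorProduct.lid k A).injective
  simp only [LinearMap.comp_apply, LinearEquiv.coe_coe, LinearEquiv.apply_symm_apply]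
  exact Hs.counit_left x

lemma coassocL_comp :
    TensorProduct.map Hs.Δ LinearMap.id ∘ₗ Hs.Δ
      = (TensorProduct.assoc k A A A).symm.toLinearMap
        ∘ₗ (TensorProduct.map LinearMap.id Hs.Δ ∘ₗ Hs.Δ) := by
  apply LinearMap.ext; intro x
  apply (TensorProduct.assoc k A A A).injective
  simp only [LinearMap.comp_apply, LinearEquiv.coe_coe, LinearEquiv.apply_symm_apply]
  exact (Hs.coassoc x).symm

/-- the tensor-square comultiplication on `A ⊗ A`. -/
def sqComul : A ⊗[k] A →ₗ[k] (A ⊗[k] A) ⊗[k] (A ⊗[k] A) :=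
  (tensorTensorTensorComm k A A A A).toLinearMap ∘ₗ TensorProduct.map Hs.Δ Hs.Δ

/-- the tensor-square counit on `A ⊗ A`. -/
def sqCounit : A ⊗[k] A →ₗ[k] k :=
  LinearMap.mul' k k ∘ₗ TensorProduct.map Hs.ε Hs.ε

lemma sqComul_apply (u : A ⊗[k] A) :
    sqComul Hs u = (tensorTensorTensorComm k A A A A) (TensorProduct.map Hs.Δ Hs.Δ u) := rfl

lemma sqCounit_tmul (a b : A) : sqCounit Hs (a ⊗ₜ b) = Hs.ε a * Hs.ε b := rfl

lemma map_id_comp' {M P P' Q : Type*} [AddCommMonoid M] [AddCommMonoid P]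
    [AddCommMonoid P'] [AddCommMonoid Q] [Module k M] [Module k P] [Module k P']
    [Module k Q] (g₂ : P' →ₗ[k] Q) (g₁ : P →ₗ[k] P') :
    TensorProduct.map (LinearMap.id : M →ₗ[k] M) (g₂ ∘ₗ g₁)
      = TensorProduct.map LinearMap.id g₂ ∘ₗ TensorProduct.map LinearMap.id g₁ := by
  rw [← TensorProduct.map_comp, LinearMap.id_comp]

lemma map_comp_id' {M P P' Q : Type*} [AddCommMonoid M] [AddCommMonoid P]
    [AddCommMonoid P'] [AddCommMonoid Q] [Module k M] [Module k P] [Module k P']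
    [Module k Q] (g₂ : P' →ₗ[k] Q) (g₁ : P →ₗ[k] P') :
    TensorProduct.map (g₂ ∘ₗ g₁) (LinearMap.id : M →ₗ[k] M)
      = TensorProduct.map g₂ LinearMap.id ∘ₗ TensorProduct.map g₁ LinearMap.id := by
  rw [← TensorProduct.map_comp, LinearMap.id_comp]

lemma sqComul_coassoc : ∀ w : A ⊗[k] A,
    TensorProduct.map LinearMap.id (sqComul Hs) (sqComul Hs w)
      = TensorProduct.assoc k (A ⊗[k] A) (A ⊗[k] A) (A ⊗[k] A)
          (TensorProduct.map (sqComul Hs) LinearMap.id (sqComul Hs w)) := by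
  have N1 : TensorProduct.map LinearMap.id (TensorProduct.map Hs.Δ Hs.Δ)
        ∘ₗ (tensorTensorTensorComm k A A A A).toLinearMap
      = (tensorTensorTensorComm k A (A ⊗[k] A) A (A ⊗[k] A)).toLinearMap
        ∘ₗ TensorProduct.map (TensorProduct.map LinearMap.id Hs.Δ)
            (TensorProduct.map LinearMap.id Hs.Δ) := by
    apply TensorProduct.ext_fourfold'
    intro a b c d
    simp
  have N2 : TensorProduct.map (TensorProduct.map Hs.Δ Hs.Δ) LinearMap.id
        ∘ₗ (tensorTensorTensorComm k A A A A).toLinearMap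
      = (tensorTensorTensorComm k (A ⊗[k] A) A (A ⊗[k] A) A).toLinearMap
        ∘ₗ TensorProduct.map (TensorProduct.map Hs.Δ LinearMap.id)
            (TensorProduct.map Hs.Δ LinearMap.id) := by
    apply TensorProduct.ext_fourfold'
    intro a b c d
    simp
  have stepC : TensorProduct.map LinearMap.id
          (tensorTensorTensorComm k A A A A).toLinearMap
        ∘ₗ (tensorTensorTensorComm k A (A ⊗[k] A) A (A ⊗[k] A)).toLinearMap
      = (TensorProduct.assoc k (A ⊗[k] A) (A ⊗[k] A) (A ⊗[k] A)).toLinearMap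
        ∘ₗ TensorProduct.map (tensorTensorTensorComm k A A A A).toLinearMap LinearMap.id
        ∘ₗ (tensorTensorTensorComm k (A ⊗[k] A) A (A ⊗[k] A) A).toLinearMap
        ∘ₗ TensorProduct.map (TensorProduct.assoc k A A A).symm.toLinearMap
            (TensorProduct.assoc k A A A).symm.toLinearMap := by
    apply ext_sixfold
    intro a b c d e f'
    simp
  have el : TensorProduct.map
        (TensorProduct.map Hs.Δ LinearMap.id ∘ₗ Hs.Δ)
        (TensorProduct.map Hs.Δ LinearMap.id ∘ₗ Hs.Δ)
      = TensorProduct.map (TensorProduct.assoc k A A A).symm.toLinearMap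
          (TensorProduct.assoc k A A A).symm.toLinearMap
        ∘ₗ TensorProduct.map (TensorProduct.map LinearMap.id Hs.Δ ∘ₗ Hs.Δ)
            (TensorProduct.map LinearMap.id Hs.Δ ∘ₗ Hs.Δ) := by
    rw [coassocL_comp, TensorProduct.map_comp]
  intro w
  simp only [sqComul]
  rw [map_id_comp', map_comp_id']
  simp only [LinearMap.comp_apply]
  have n1 := LinearMap.congr_fun N1 (TensorProduct.map Hs.Δ Hs.Δ w)
  simp only [LinearMap.comp_apply] at n1
  have n2 := LinearMap.congr_fun N2 (TensorProduct.map Hs.Δ Hs.Δ w)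
  simp only [LinearMap.comp_apply] at n2
  rw [n1, n2]
  have m1 := LinearMap.congr_fun
    (TensorProduct.map_comp (TensorProduct.map LinearMap.id Hs.Δ)
      (TensorProduct.map LinearMap.id Hs.Δ) Hs.Δ Hs.Δ) w
  simp only [LinearMap.comp_apply] at m1
  rw [← m1]
  have m2 := LinearMap.congr_fun
    (TensorProduct.map_comp (TensorProduct.map Hs.Δ LinearMap.id)
      (TensorProduct.map Hs.Δ LinearMap.id) Hs.Δ Hs.Δ) w
  simp only [LinearMap.comp_apply] at m2
  rw [← m2]
  have e2 := LinearMap.congr_fun el w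
  simp only [LinearMap.comp_apply] at e2
  rw [e2]
  have c1 := LinearMap.congr_fun stepC
    ((TensorProduct.map (TensorProduct.map LinearMap.id Hs.Δ ∘ₗ Hs.Δ)
      (TensorProduct.map LinearMap.id Hs.Δ ∘ₗ Hs.Δ)) w)
  simp only [LinearMap.comp_apply] at c1
  rw [c1]
  rfl

lemma sqCounit_right : ∀ w : A ⊗[k] A,
    TensorProduct.rid k (A ⊗[k] A)
        (TensorProduct.map LinearMap.id (sqCounit Hs) (sqComul Hs w)) = w := by
  have N3 : TensorProduct.map LinearMap.id (TensorProduct.map Hs.ε Hs.ε)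
        ∘ₗ (tensorTensorTensorComm k A A A A).toLinearMap
      = (tensorTensorTensorComm k A k A k).toLinearMap
        ∘ₗ TensorProduct.map (TensorProduct.map LinearMap.id Hs.ε)
            (TensorProduct.map LinearMap.id Hs.ε) := by
    apply TensorProduct.ext_fourfold'
    intro a b c d
    simp
  have E1 : (TensorProduct.rid k (A ⊗[k] A)).toLinearMap
        ∘ₗ TensorProduct.map LinearMap.id (LinearMap.mul' k k)
        ∘ₗ (tensorTensorTensorComm k A k A k).toLinearMap
        ∘ₗ TensorProduct.map (TensorProduct.rid k A).symm.toLinearMap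
            (TensorProduct.rid k A).symm.toLinearMap
      = LinearMap.id := by
    apply TensorProduct.ext'
    intro a b
    simp
  intro w
  simp only [sqComul, sqCounit]
  rw [map_id_comp']
  simp only [LinearMap.comp_apply]
  have n3 := LinearMap.congr_fun N3 (TensorProduct.map Hs.Δ Hs.Δ w)
  simp only [LinearMap.comp_apply] at n3
  rw [n3]
  have m1 := LinearMap.congr_fun
    (TensorProduct.map_comp (TensorProduct.map LinearMap.id Hs.ε)
      (TensorProduct.map LinearMap.id Hs.ε) Hs.Δ Hs.Δ) w
  simp only [LinearMap.comp_apply] at m1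
  rw [← m1, counitR_comp]
  have e1 := LinearMap.congr_fun E1 w
  simp only [LinearMap.comp_apply] at e1
  exact e1

lemma sqCounit_left : ∀ w : A ⊗[k] A,
    TensorProduct.lid k (A ⊗[k] A)
        (TensorProduct.map (sqCounit Hs) LinearMap.id (sqComul Hs w)) = w := by
  have N4 : TensorProduct.map (TensorProduct.map Hs.ε Hs.ε) LinearMap.id
        ∘ₗ (tensorTensorTensorComm k A A A A).toLinearMap
      = (tensorTensorTensorComm k k A k A).toLinearMap
        ∘ₗ TensorProduct.map (TensorProduct.map Hs.ε LinearMap.id)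
            (TensorProduct.map Hs.ε LinearMap.id) := by
    apply TensorProduct.ext_fourfold'
    intro a b c d
    simp
  have E2 : (TensorProduct.lid k (A ⊗[k] A)).toLinearMap
        ∘ₗ TensorProduct.map (LinearMap.mul' k k) LinearMap.id
        ∘ₗ (tensorTensorTensorComm k k A k A).toLinearMap
        ∘ₗ TensorProduct.map (TensorProduct.lid k A).symm.toLinearMap
            (TensorProduct.lid k A).symm.toLinearMap
      = LinearMap.id := by
    apply TensorProduct.ext'
    intro a b
    simp
  intro w
  simp only [sqComul, sqCounit]
  rw [map_comp_id']
  simp only [LinearMap.comp_apply]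
  have n4 := LinearMap.congr_fun N4 (TensorProduct.map Hs.Δ Hs.Δ w)
  simp only [LinearMap.comp_apply] at n4
  rw [n4]
  have m1 := LinearMap.congr_fun
    (TensorProduct.map_comp (TensorProduct.map Hs.ε LinearMap.id)
      (TensorProduct.map Hs.ε LinearMap.id) Hs.Δ Hs.Δ) w
  simp only [LinearMap.comp_apply] at m1
  rw [← m1, counitL_comp]
  have e2 := LinearMap.congr_fun E2 w
  simp only [LinearMap.comp_apply] at e2
  exact e2

lemma hopf_S_mul (hcomm : ∀ x y : A, x * y = y * x) :
    ∀ a b : A, Hs.S (a * b) = Hs.S a * Hs.S b := by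
  set F := LinearMap.mul' k A with hF
  set G := LinearMap.mul' k A ∘ₗ TensorProduct.map Hs.S Hs.S with hG
  set H := Hs.S ∘ₗ LinearMap.mul' k A with hH
  have keyGF : LinearMap.mul' k A ∘ₗ TensorProduct.map G F
        ∘ₗ (tensorTensorTensorComm k A A A A).toLinearMap
      = LinearMap.mul' k A ∘ₗ TensorProduct.map
          (LinearMap.mul' k A ∘ₗ TensorProduct.map Hs.S LinearMap.id)
          (LinearMap.mul' k A ∘ₗ TensorProduct.map Hs.S LinearMap.id) := by
    apply TensorProduct.ext_fourfold'
    intro x y z w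
    simp only [LinearMap.comp_apply, LinearEquiv.coe_coe,
      tensorTensorTensorComm_tmul, TensorProduct.map_tmul, LinearMap.mul'_apply,
      LinearMap.id_coe, id_eq, hG, hF]
    exact mul_exchange hcomm _ _ _ _
  have keyFH : LinearMap.mul' k A ∘ₗ TensorProduct.map F H
        ∘ₗ (tensorTensorTensorComm k A A A A).toLinearMap
      = (LinearMap.mul' k A ∘ₗ TensorProduct.map LinearMap.id Hs.S)
        ∘ₗ LinearMap.mul' k (A ⊗[k] A) := by
    apply TensorProduct.ext_fourfold'
    intro x y z w
    simp only [LinearMap.comp_apply, LinearEquiv.coe_coe,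
      tensorTensorTensorComm_tmul, TensorProduct.map_tmul, LinearMap.mul'_apply,
      LinearMap.id_coe, id_eq, hF, hH, Algebra.TensorProduct.tmul_mul_tmul]
  have GF : conv (sqComul Hs) G F = Algebra.linearMap k A ∘ₗ sqCounit Hs := by
    apply TensorProduct.ext'
    intro a b
    rw [conv_apply]
    simp only [sqComul, sqCounit, LinearMap.comp_apply, TensorProduct.map_tmul]
    have := LinearMap.congr_fun keyGF (Hs.Δ a ⊗ₜ[k] Hs.Δ b)
    simp only [LinearMap.comp_apply] at this
    rw [this]
    rw [TensorProduct.map_tmul, LinearMap.mul'_apply]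
    simp only [LinearMap.comp_apply]
    rw [Hs.antipode_left, Hs.antipode_left, LinearMap.mul'_apply, ← map_mul]
    rfl
  have FH : conv (sqComul Hs) F H = Algebra.linearMap k A ∘ₗ sqCounit Hs := by
    apply TensorProduct.ext'
    intro a b
    rw [conv_apply]
    simp only [sqComul, sqCounit, LinearMap.comp_apply, TensorProduct.map_tmul]
    have := LinearMap.congr_fun keyFH (Hs.Δ a ⊗ₜ[k] Hs.Δ b)
    simp only [LinearMap.comp_apply] at this
    rw [this]
    rw [LinearMap.mul'_apply, ← Hs.comul_mul, Hs.antipode_right, Hs.counit_mul,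
      LinearMap.mul'_apply]
    rfl
  have hGH : G = H := by
    calc G = conv (sqComul Hs) G (Algebra.linearMap k A ∘ₗ sqCounit Hs) :=
          (conv_one_right (sqComul Hs) (sqCounit Hs) (sqCounit_right Hs) G).symm
    _ = conv (sqComul Hs) G (conv (sqComul Hs) F H) := by rw [FH]
    _ = conv (sqComul Hs) (conv (sqComul Hs) G F) H :=
          (conv_assoc (sqComul Hs) (sqComul_coassoc Hs) G F H).symm
    _ = conv (sqComul Hs) (Algebra.linearMap k A ∘ₗ sqCounit Hs) H := by rw [GF]
    _ = H := conv_one_left (sqComul Hs) (sqCounit Hs) (sqCounit_left Hs) H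
  intro a b
  have := LinearMap.congr_fun hGH (a ⊗ₜ[k] b)
  simp only [hG, hH, LinearMap.comp_apply, TensorProduct.map_tmul,
    LinearMap.mul'_apply] at this
  exact this.symm

lemma isAlgMor_S (hcomm : ∀ x y : A, x * y = y * x) :
    IsAlgebraMorphism k A A Hs.S :=
  ⟨hopf_S_mul Hs hcomm, hopf_S_one Hs⟩

section ConvS

variable {R : Type*} [Ring R] [Algebra k R]

lemma conv_S_left {f : A →ₗ[k] R} (hf : IsAlgebraMorphism k A R f) :
    conv Hs.Δ (f ∘ₗ Hs.S) f = Algebra.linearMap k R ∘ₗ Hs.ε := by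
  have key : LinearMap.mul' k R ∘ₗ TensorProduct.map (f ∘ₗ Hs.S) f
      = f ∘ₗ LinearMap.mul' k A ∘ₗ TensorProduct.map Hs.S LinearMap.id := by
    apply TensorProduct.ext'
    intro u v
    simp [hf.1]
  apply LinearMap.ext; intro x
  rw [conv_apply, ← LinearMap.comp_apply (LinearMap.mul' k R)]
  rw [key]
  simp only [LinearMap.comp_apply]
  rw [Hs.antipode_left, isAlgMor_algebraMap_comp hf]
  rfl

lemma conv_S_right {f : A →ₗ[k] R} (hf : IsAlgebraMorphism k A R f) :
    conv Hs.Δ f (f ∘ₗ Hs.S) = Algebra.linearMap k R ∘ₗ Hs.ε := by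
  have key : LinearMap.mul' k R ∘ₗ TensorProduct.map f (f ∘ₗ Hs.S)
      = f ∘ₗ LinearMap.mul' k A ∘ₗ TensorProduct.map LinearMap.id Hs.S := by
    apply TensorProduct.ext'
    intro u v
    simp [hf.1]
  apply LinearMap.ext; intro x
  rw [conv_apply, ← LinearMap.comp_apply (LinearMap.mul' k R)]
  rw [key]
  simp only [LinearMap.comp_apply]
  rw [Hs.antipode_right, isAlgMor_algebraMap_comp hf]
  rfl

end ConvS

end Hopf



/-- Abstract skew-brace data on a group `G`: a second group structure `circ`
(with inverse `ci`, shared unit `1`) satisfying the brace compatibility. -/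
structure BraceData (G : Type*) [Group G] where
  circ : G → G → G
  ci : G → G
  circ_assoc : ∀ a b c, circ (circ a b) c = circ a (circ b c)
  one_circ : ∀ a, circ 1 a = a
  circ_one : ∀ a, circ a 1 = a
  ci_circ : ∀ a, circ (ci a) a = 1
  circ_ci : ∀ a, circ a (ci a) = 1
  brace : ∀ a b c, circ a (b * c) = circ a b * (a⁻¹ * circ a c)

namespace BraceData

variable {G : Type*} [Group G] (B : BraceData G)

def lam (a b : G) : G := a⁻¹ * B.circ a b

def rho (b a : G) : G := B.circ (B.ci (B.lam a b)) (B.circ a b)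

lemma lam_def (a b : G) : B.lam a b = a⁻¹ * B.circ a b := rfl

lemma rho_def (b a : G) : B.rho b a = B.circ (B.ci (B.lam a b)) (B.circ a b) := rfl

lemma circ_eq (a b : G) : B.circ a b = a * B.lam a b := by
  rw [B.lam_def, mul_inv_cancel_left]

lemma lam_mul (a b c : G) : B.lam a (b * c) = B.lam a b * B.lam a c := by
  simp only [lam_def]
  rw [B.brace, ← mul_assoc]

lemma lam_one (a : G) : B.lam a 1 = 1 := by
  rw [B.lam_def, B.circ_one, inv_mul_cancel]

lemma lam_inv (a b : G) : B.lam a b⁻¹ = (B.lam a b)⁻¹ := by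
  have h : B.lam a b * B.lam a b⁻¹ = 1 := by
    rw [← B.lam_mul, mul_inv_cancel, B.lam_one]
  exact (inv_eq_of_mul_eq_one_right h).symm

lemma lam_circ (a b c : G) : B.lam (B.circ a b) c = B.lam a (B.lam b c) := by
  conv_rhs => rw [B.lam_def b c, B.lam_mul, B.lam_inv]
  rw [B.lam_def a (B.circ b c), ← B.circ_assoc]
  rw [B.lam_def (B.circ a b) c, B.circ_eq a b, mul_inv_rev]
  group

lemma ci_unique {u w : G} (h : B.circ u w = 1) : w = B.ci u := by
  have h2 := congrArg (B.circ (B.ci u)) h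
  rw [← B.circ_assoc, B.ci_circ, B.one_circ, B.circ_one] at h2
  exact h2

lemma ci_circ_mul (a b : G) : B.ci (B.circ a b) = B.circ (B.ci b) (B.ci a) := by
  refine (B.ci_unique ?_).symm
  rw [B.circ_assoc, ← B.circ_assoc b, B.circ_ci, B.one_circ, B.circ_ci]

lemma circ_lam_rho (a b : G) : B.circ (B.lam a b) (B.rho b a) = B.circ a b := by
  rw [B.rho_def, ← B.circ_assoc, B.circ_ci, B.one_circ]

lemma I_lem (a b c : G) :
    B.lam (B.lam a b) (B.lam (B.rho b a) c) = B.lam a (B.lam b c) := by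
  rw [← B.lam_circ, B.circ_lam_rho, B.lam_circ]

lemma lam_circ₂ (a b c : G) :
    B.circ (B.lam a b) (B.lam (B.rho b a) c) = B.lam a (B.circ b c) := by
  rw [B.circ_eq (B.lam a b), B.I_lem, ← B.lam_mul, ← B.circ_eq]

lemma A1_lem (a b c : G) : B.rho c (B.rho b a) = B.rho (B.circ b c) a := by
  have h1 : B.circ (B.rho b a) c
      = B.circ (B.ci (B.lam a b)) (B.circ a (B.circ b c)) := by
    conv_lhs => rw [B.rho_def b a]
    rw [B.circ_assoc, B.circ_assoc]
  rw [B.rho_def c (B.rho b a), h1, B.rho_def (B.circ b c) a, ← B.circ_assoc,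
    ← B.ci_circ_mul, B.lam_circ₂]

lemma III_lem (a b c : G) :
    B.rho c (B.rho b a) = B.rho (B.rho c b) (B.rho (B.lam b c) a) := by
  rw [B.A1_lem, B.A1_lem, B.circ_lam_rho]

lemma II_lem (a b c : G) :
    B.rho (B.lam (B.rho b a) c) (B.lam a b)
      = B.lam (B.rho (B.lam b c) a) (B.rho c b) := by
  set s := B.lam b c with hs
  set q := B.ci (B.lam a s) with hq
  set m := B.lam a (B.circ b c) with hm
  have hq1 : B.circ q (B.lam a s) = 1 := B.ci_circ _
  have ht : B.rho s a = B.circ q a * q⁻¹ := by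
    rw [B.rho_def s a, ← hq, B.circ_eq a s, B.brace, hq1, mul_one]
  have hctr : B.circ (B.rho s a) (B.rho c b)
      = B.circ q (B.circ a (B.circ b c)) := by
    rw [B.rho_def s a, ← hq, B.rho_def c b, ← hs, B.circ_assoc]
    congr 1
    rw [B.circ_assoc, ← B.circ_assoc s, B.circ_ci, B.one_circ]
  have hL : B.rho (B.lam (B.rho b a) c) (B.lam a b) = B.circ q m := by
    rw [B.rho_def, B.I_lem, B.lam_circ₂, ← hs, ← hq, ← hm]
  have hR : B.lam (B.rho s a) (B.rho c b) = B.circ q m := by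
    rw [B.lam_def, hctr, ht, B.circ_eq a (B.circ b c), B.brace, ← hm]
    group
  rw [hL]
  exact hR.symm

def uu (p q : G) : G := B.circ p q * p⁻¹

def vv (p q : G) : G := B.circ (B.ci (B.uu p q)) (B.circ p q)

lemma uu_def (p q : G) : B.uu p q = B.circ p q * p⁻¹ := rfl

lemma vv_def (p q : G) : B.vv p q = B.circ (B.ci (B.uu p q)) (B.circ p q) := rfl

lemma circ_uu_vv (p q : G) : B.circ (B.uu p q) (B.vv p q) = B.circ p q := by
  rw [B.vv_def, ← B.circ_assoc, B.circ_ci, B.one_circ]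

lemma J1_lem (p q : G) : B.lam (B.uu p q) (B.vv p q) = p := by
  rw [B.lam_def, B.circ_uu_vv, B.uu_def, B.circ_eq p q, mul_inv_rev]
  group

lemma J2_lem (p q : G) : B.rho (B.vv p q) (B.uu p q) = q := by
  rw [B.rho_def, B.J1_lem, B.circ_uu_vv, ← B.circ_assoc, B.ci_circ, B.one_circ]

lemma J3_lem (a b : G) : B.uu (B.lam a b) (B.rho b a) = a := by
  rw [B.uu_def, B.circ_lam_rho, B.circ_eq a b]
  group

lemma J4_lem (a b : G) : B.vv (B.lam a b) (B.rho b a) = b := by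
  rw [B.vv_def, B.J3_lem, B.circ_lam_rho, ← B.circ_assoc, B.ci_circ, B.one_circ]

end BraceData


open TensorProduct



section MoreExt

variable {k}
variable {M N P Q M' : Type*}
  [AddCommMonoid M] [AddCommMonoid N] [AddCommMonoid P] [AddCommMonoid Q]
  [AddCommMonoid M']
  [Module k M] [Module k N] [Module k P] [Module k Q] [Module k M']

lemma ext_threefold'' {f g : M ⊗[k] (N ⊗[k] P) →ₗ[k] Q}
    (h : ∀ (m : M) (n : N) (p : P), f (m ⊗ₜ (n ⊗ₜ p)) = g (m ⊗ₜ (n ⊗ₜ p))) :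
    f = g := by
  apply TensorProduct.ext'
  intro m w
  induction w using TensorProduct.induction_on with
  | zero => simp only [tmul_zero, map_zero]
  | add w1 w2 h1 h2 => rw [tmul_add, map_add, map_add, h1, h2]
  | tmul n p => exact h m n p

lemma map_right_apply (f : M →ₗ[k] M') (g₂ : P →ₗ[k] Q) (g₁ : N →ₗ[k] P)
    (u : M ⊗[k] N) :
    TensorProduct.map f (g₂ ∘ₗ g₁) u
      = TensorProduct.map f g₂ (TensorProduct.map LinearMap.id g₁ u) := by
  have : TensorProduct.map f (g₂ ∘ₗ g₁)
      = TensorProduct.map f g₂ ∘ₗ TensorProduct.map LinearMap.id g₁ := by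
    rw [← TensorProduct.map_comp, LinearMap.comp_id]
  rw [this]; rfl

lemma map_left_apply (f₂ : P →ₗ[k] Q) (f₁ : N →ₗ[k] P) (g : M →ₗ[k] M')
    (u : N ⊗[k] M) :
    TensorProduct.map (f₂ ∘ₗ f₁) g u
      = TensorProduct.map f₂ g (TensorProduct.map f₁ LinearMap.id u) := by
  have : TensorProduct.map (f₂ ∘ₗ f₁) g
      = TensorProduct.map f₂ g ∘ₗ TensorProduct.map f₁ LinearMap.id := by
    rw [← TensorProduct.map_comp, LinearMap.comp_id]
  rw [this]; rfl

end MoreExt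

section Star

variable {k}
variable {A R : Type*} [Ring A] [Algebra k A] [Ring R] [Algebra k R]
variable (HB : HopfBrace k A)

/-- The brace identity (★): `f ⋆' (g ⋆ h) = (f ⋆' g) ⋆ (f⁻ ⋆ (f ⋆' h))`. -/
lemma star_conv (hR : ∀ u v : R, u * v = v * u)
    {f g h : A →ₗ[k] R} (hf : IsAlgebraMorphism k A R f)
    (hg : IsAlgebraMorphism k A R g) (hh : IsAlgebraMorphism k A R h) :
    conv HB.snd.Δ f (conv HB.fst.Δ g h)
      = conv HB.fst.Δ (conv HB.snd.Δ f g)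
          (conv HB.fst.Δ (f ∘ₗ HB.fst.S) (conv HB.snd.Δ f h)) := by
  set Ev : A ⊗[k] (A ⊗[k] A) →ₗ[k] R :=
    LinearMap.mul' k R ∘ₗ TensorProduct.map f
      (LinearMap.mul' k R ∘ₗ TensorProduct.map g h) with hEv
  have hEvMor : IsAlgebraMorphism k (A ⊗[k] (A ⊗[k] A)) R Ev :=
    isAlgMor_comp
      (isAlgMor_map hf (isAlgMor_comp (isAlgMor_map hg hh) (isAlgMor_mul' hR)))
      (isAlgMor_mul' hR)
  -- step (a)
  have eqa : ∀ x : A, conv HB.snd.Δ f (conv HB.fst.Δ g h) x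
      = Ev (braceLHS k A HB.fst.Δ HB.snd.Δ x) := by
    intro x
    rw [conv_apply, braceLHS]
    simp only [LinearMap.comp_apply, hEv, conv]
    simp only [map_right_apply, LinearMap.comp_apply]
  -- step (b)
  have ev1 : Ev ∘ₗ TensorProduct.map LinearMap.id (ι₁ k A A)
      = LinearMap.mul' k R ∘ₗ TensorProduct.map f g := by
    apply TensorProduct.ext'
    intro x y
    simp [hEv, Algebra.TensorProduct.one_def, hh.2]
  have ev2 : Ev ∘ₗ TensorProduct.map LinearMap.id (ι₂ k A A)
      = LinearMap.mul' k R ∘ₗ TensorProduct.map f h := by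
    apply TensorProduct.ext'
    intro x y
    simp [hEv, Algebra.TensorProduct.one_def, hg.2]
  have keyb : Ev ∘ₗ mul₃ k (A ⊗[k] (A ⊗[k] A))
        ∘ₗ TensorProduct.map
            ((TensorProduct.map LinearMap.id (ι₁ k A A)) ∘ₗ HB.snd.Δ)
            (TensorProduct.map ((ι₁ k A (A ⊗[k] A)) ∘ₗ HB.fst.S)
              ((TensorProduct.map LinearMap.id (ι₂ k A A)) ∘ₗ HB.snd.Δ))
      = LinearMap.mul' k R
        ∘ₗ TensorProduct.map (conv HB.snd.Δ f g)
            (LinearMap.mul' k R ∘ₗ TensorProduct.map (f ∘ₗ HB.fst.S)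
              (conv HB.snd.Δ f h)) := by
    apply ext_threefold''
    intro a b c
    simp only [LinearMap.comp_apply, TensorProduct.map_tmul, mul₃,
      LinearMap.mul'_apply, LinearMap.id_coe, id_eq]
    rw [hEvMor.1, hEvMor.1]
    have e1 : Ev (TensorProduct.map LinearMap.id (ι₁ k A A) (HB.snd.Δ a))
        = conv HB.snd.Δ f g a := by
      rw [← LinearMap.comp_apply, ev1]; rfl
    have e2 : Ev (TensorProduct.map LinearMap.id (ι₂ k A A) (HB.snd.Δ c))
        = conv HB.snd.Δ f h c := by
      rw [← LinearMap.comp_apply, ev2]; rfl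
    have e3 : Ev ((ι₁ k A (A ⊗[k] A)) (HB.fst.S b)) = f (HB.fst.S b) := by
      simp [hEv, Algebra.TensorProduct.one_def, hg.2, hh.2]
    rw [e1, e2, e3]
  have eqb : ∀ x : A,
      conv HB.fst.Δ (conv HB.snd.Δ f g)
          (conv HB.fst.Δ (f ∘ₗ HB.fst.S) (conv HB.snd.Δ f h)) x
        = Ev (braceRHS k A HB.fst.Δ HB.snd.Δ HB.fst.S x) := by
    intro x
    have hh2 := LinearMap.congr_fun keyb
      ((TensorProduct.map LinearMap.id HB.fst.Δ) (HB.fst.Δ x))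
    simp only [LinearMap.comp_apply] at hh2
    simp only [map_right_apply, LinearMap.comp_apply] at hh2
    rw [conv_apply, braceRHS]
    simp only [LinearMap.comp_apply]
    rw [show conv HB.fst.Δ (f ∘ₗ HB.fst.S) (conv HB.snd.Δ f h)
        = LinearMap.mul' k R ∘ₗ (TensorProduct.map (f ∘ₗ HB.fst.S)
            (conv HB.snd.Δ f h) ∘ₗ HB.fst.Δ) from rfl]
    simp only [map_right_apply, LinearMap.comp_apply]
    exact hh2.symm
  apply LinearMap.ext
  intro x
  rw [eqa x, eqb x, HB.compat x]

end Star

/-! ### The group of algebra morphisms under convolution -/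

def MU (k : Type*) [Field k] (A R : Type*) [Ring A] [Algebra k A]
    [Ring R] [Algebra k R] : Type _ :=
  {f : A →ₗ[k] R // IsAlgebraMorphism k A R f}

section Group

variable {k}
variable {A R : Type*} [Ring A] [Algebra k A] [Ring R] [Algebra k R]

def muGroup (Hs : HopfStruct k A) (hA : ∀ x y : A, x * y = y * x)
    (hR : ∀ u v : R, u * v = v * u) : Group (MU k A R) where
  mul f g := ⟨conv Hs.Δ f.1 g.1,
    conv_isAlgMor Hs.Δ Hs.comul_mul Hs.comul_one hR f.2 g.2⟩
  one := ⟨Algebra.linearMap k R ∘ₗ Hs.ε,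
    isAlgMor_comp ⟨Hs.counit_mul, Hs.counit_one⟩ isAlgMor_algebraMap⟩
  inv f := ⟨f.1 ∘ₗ Hs.S, isAlgMor_comp (isAlgMor_S Hs hA) f.2⟩
  mul_assoc f g h := Subtype.ext (conv_assoc Hs.Δ Hs.coassoc f.1 g.1 h.1)
  one_mul f := Subtype.ext (conv_one_left Hs.Δ Hs.ε Hs.counit_left f.1)
  mul_one f := Subtype.ext (conv_one_right Hs.Δ Hs.ε Hs.counit_right f.1)
  inv_mul_cancel f := Subtype.ext (conv_S_left Hs f.2)

variable (HB : HopfBrace k A)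

variable (hA : ∀ x y : A, x * y = y * x) (hR : ∀ u v : R, u * v = v * u)

lemma mu_mul_val (f g : MU k A R) :
    (letI := muGroup (R := R) HB.fst hA hR; (f * g).1) = conv HB.fst.Δ f.1 g.1 := rfl

lemma mu_inv_val (f : MU k A R) :
    (letI := muGroup (R := R) HB.fst hA hR; (f⁻¹).1) = f.1 ∘ₗ HB.fst.S := rfl

lemma mu_one_val :
    (letI := muGroup (R := R) HB.fst hA hR; (1 : MU k A R).1)
      = Algebra.linearMap k R ∘ₗ HB.fst.ε := rfl

/-- `f ⋆' 1 = f` for every algebra morphism `f`, derived from the brace identity. -/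
lemma circ_unit_right (hA : ∀ x y : A, x * y = y * x)
    (hR : ∀ u v : R, u * v = v * u) (f : MU k A R) :
    conv HB.snd.Δ f.1 (Algebra.linearMap k R ∘ₗ HB.fst.ε) = f.1 := by
  letI := muGroup (R := R) HB.fst hA hR
  set onev : MU k A R := 1 with hone
  set u : MU k A R := ⟨conv HB.snd.Δ f.1 onev.1,
    conv_isAlgMor HB.snd.Δ HB.snd.comul_mul HB.snd.comul_one hR f.2 onev.2⟩ with hu
  have hstar := star_conv HB hR f.2 onev.2 onev.2
  have honemul : conv HB.fst.Δ onev.1 onev.1 = onev.1 := by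
    exact conv_one_right HB.fst.Δ HB.fst.ε HB.fst.counit_right onev.1
  rw [honemul] at hstar
  have hsub : u = u * (f⁻¹ * u) := by
    apply Subtype.ext
    exact hstar
  have hcan : u * (1 : MU k A R) = u * (f⁻¹ * u) := by
    rw [mul_one]; exact hsub
  have hone1 : (1 : MU k A R) = f⁻¹ * u := mul_left_cancel hcan
  have hfu : f = u := by
    have h2 := congrArg (fun z => f * z) hone1
    simp only [mul_one] at h2
    rw [← mul_assoc, mul_inv_cancel, one_mul] at h2
    exact h2
  have := congrArg Subtype.val hfu
  exact this.symm

end Group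

section CounitEq

variable {k}
variable {A : Type*} [Ring A] [Algebra k A]
variable (HB : HopfBrace k A) (hA : ∀ x y : A, x * y = y * x)

lemma counit_eq (hA : ∀ x y : A, x * y = y * x) : HB.fst.ε = HB.snd.ε := by
  have hk : ∀ u v : k, u * v = v * u := fun u v => mul_comm u v
  set f : MU k A k := ⟨Algebra.linearMap k k ∘ₗ HB.snd.ε,
    isAlgMor_comp ⟨HB.snd.counit_mul, HB.snd.counit_one⟩ isAlgMor_algebraMap⟩ with hf
  have h1 := circ_unit_right HB hA hk f
  have h2 : conv HB.snd.Δ f.1 (Algebra.linearMap k k ∘ₗ HB.fst.ε)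
      = Algebra.linearMap k k ∘ₗ HB.fst.ε := by
    exact conv_one_left HB.snd.Δ HB.snd.ε HB.snd.counit_left _
  rw [h1] at h2
  -- h2 : f.1 = η ∘ ε ; i.e. η∘ε' = η∘ε
  apply LinearMap.ext
  intro x
  have := LinearMap.congr_fun h2 x
  simp only [hf, LinearMap.comp_apply, Algebra.linearMap_apply,
    Algebra.algebraMap_self, RingHom.id_apply] at this
  exact this.symm

end CounitEq

section Brace

variable {k}
variable {A R : Type*} [Ring A] [Algebra k A] [Ring R] [Algebra k R]
variable (HB : HopfBrace k A)

def muBrace (hA : ∀ x y : A, x * y = y * x) (hR : ∀ u v : R, u * v = v * u) :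
    @BraceData (MU k A R) (muGroup HB.fst hA hR) :=
  letI := muGroup (R := R) HB.fst hA hR
  { circ := fun f g => ⟨conv HB.snd.Δ f.1 g.1,
      conv_isAlgMor HB.snd.Δ HB.snd.comul_mul HB.snd.comul_one hR f.2 g.2⟩
    ci := fun f => ⟨f.1 ∘ₗ HB.snd.S, isAlgMor_comp (isAlgMor_S HB.snd hA) f.2⟩
    circ_assoc := fun f g h =>
      Subtype.ext (conv_assoc HB.snd.Δ HB.snd.coassoc f.1 g.1 h.1)
    one_circ := fun f => by
      apply Subtype.ext
      show conv HB.snd.Δ (Algebra.linearMap k R ∘ₗ HB.fst.ε) f.1 = f.1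
      rw [counit_eq HB hA]
      exact conv_one_left HB.snd.Δ HB.snd.ε HB.snd.counit_left f.1
    circ_one := fun f => by
      apply Subtype.ext
      show conv HB.snd.Δ f.1 (Algebra.linearMap k R ∘ₗ HB.fst.ε) = f.1
      rw [counit_eq HB hA]
      exact conv_one_right HB.snd.Δ HB.snd.ε HB.snd.counit_right f.1
    ci_circ := fun f => by
      apply Subtype.ext
      show conv HB.snd.Δ (f.1 ∘ₗ HB.snd.S) f.1 = Algebra.linearMap k R ∘ₗ HB.fst.ε
      rw [counit_eq HB hA]
      exact conv_S_left HB.snd f.2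
    circ_ci := fun f => by
      apply Subtype.ext
      show conv HB.snd.Δ f.1 (f.1 ∘ₗ HB.snd.S) = Algebra.linearMap k R ∘ₗ HB.fst.ε
      rw [counit_eq HB hA]
      exact conv_S_right HB.snd f.2
    brace := fun f g h => Subtype.ext (star_conv HB hR f.2 g.2 h.2) }

end Brace


open TensorProduct



section TensorComm

variable {k}
variable {M N : Type*} [Ring M] [Algebra k M] [Ring N] [Algebra k N]

lemma tensor_comm_mul (hM : ∀ x y : M, x * y = y * x) (hN : ∀ x y : N, x * y = y * x) :
    ∀ u v : M ⊗[k] N, u * v = v * u := by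
  intro u v
  induction u using TensorProduct.induction_on with
  | zero => rw [zero_mul, mul_zero]
  | tmul m n =>
    induction v using TensorProduct.induction_on with
    | zero => rw [zero_mul, mul_zero]
    | tmul m' n' => rw [Algebra.TensorProduct.tmul_mul_tmul,
        Algebra.TensorProduct.tmul_mul_tmul, hM m m', hN n n']
    | add x y hx hy => rw [mul_add, add_mul, hx, hy]
  | add x y hx hy => rw [add_mul, mul_add, hx, hy]

lemma map_split {P Q M' N' : Type*} [AddCommMonoid P] [AddCommMonoid Q]
    [AddCommMonoid M'] [AddCommMonoid N'] [Module k P] [Module k Q]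
    [Module k M'] [Module k N'] (f : P →ₗ[k] M') (g : Q →ₗ[k] N') :
    TensorProduct.map f g
      = TensorProduct.map f LinearMap.id ∘ₗ TensorProduct.map LinearMap.id g := by
  rw [← TensorProduct.map_comp, LinearMap.comp_id, LinearMap.id_comp]

end TensorComm

section Words

variable {k}
variable {A R : Type*} [Ring A] [Algebra k A] [Ring R] [Algebra k R]
variable (HB : HopfBrace k A)
variable (hA : ∀ x y : A, x * y = y * x) (hR : ∀ u v : R, u * v = v * u)

def muLam (a b : MU k A R) : MU k A R :=
  @BraceData.lam _ (muGroup HB.fst hA hR) (muBrace HB hA hR) a b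

def muRho (b a : MU k A R) : MU k A R :=
  @BraceData.rho _ (muGroup HB.fst hA hR) (muBrace HB hA hR) b a

def muUU (p q : MU k A R) : MU k A R :=
  @BraceData.uu _ (muGroup HB.fst hA hR) (muBrace HB hA hR) p q

def muVV (p q : MU k A R) : MU k A R :=
  @BraceData.vv _ (muGroup HB.fst hA hR) (muBrace HB hA hR) p q

lemma muLam_val (a b : MU k A R) :
    (muLam HB hA hR a b).1
      = conv HB.fst.Δ (a.1 ∘ₗ HB.fst.S) (conv HB.snd.Δ a.1 b.1) := rfl

lemma muRho_val (b a : MU k A R) :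
    (muRho HB hA hR b a).1
      = conv HB.snd.Δ ((muLam HB hA hR a b).1 ∘ₗ HB.snd.S)
          (conv HB.snd.Δ a.1 b.1) := rfl

lemma muUU_val (p q : MU k A R) :
    (muUU HB hA hR p q).1
      = conv HB.fst.Δ (conv HB.snd.Δ p.1 q.1) (p.1 ∘ₗ HB.fst.S) := rfl

lemma muVV_val (p q : MU k A R) :
    (muVV HB hA hR p q).1
      = conv HB.snd.Δ ((muUU HB hA hR p q).1 ∘ₗ HB.snd.S)
          (conv HB.snd.Δ p.1 q.1) := rfl

lemma mu_I (a b c : MU k A R) :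
    muLam HB hA hR (muLam HB hA hR a b) (muLam HB hA hR (muRho HB hA hR b a) c)
      = muLam HB hA hR a (muLam HB hA hR b c) :=
  @BraceData.I_lem _ (muGroup HB.fst hA hR) (muBrace HB hA hR) a b c

lemma mu_II (a b c : MU k A R) :
    muRho HB hA hR (muLam HB hA hR (muRho HB hA hR b a) c) (muLam HB hA hR a b)
      = muLam HB hA hR (muRho HB hA hR (muLam HB hA hR b c) a) (muRho HB hA hR c b) :=
  @BraceData.II_lem _ (muGroup HB.fst hA hR) (muBrace HB hA hR) a b c

lemma mu_III (a b c : MU k A R) :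
    muRho HB hA hR c (muRho HB hA hR b a)
      = muRho HB hA hR (muRho HB hA hR c b) (muRho HB hA hR (muLam HB hA hR b c) a) :=
  @BraceData.III_lem _ (muGroup HB.fst hA hR) (muBrace HB hA hR) a b c

lemma mu_J1 (p q : MU k A R) :
    muLam HB hA hR (muUU HB hA hR p q) (muVV HB hA hR p q) = p :=
  @BraceData.J1_lem _ (muGroup HB.fst hA hR) (muBrace HB hA hR) p q

lemma mu_J2 (p q : MU k A R) :
    muRho HB hA hR (muVV HB hA hR p q) (muUU HB hA hR p q) = q :=
  @BraceData.J2_lem _ (muGroup HB.fst hA hR) (muBrace HB hA hR) p q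

lemma mu_J3 (a b : MU k A R) :
    muUU HB hA hR (muLam HB hA hR a b) (muRho HB hA hR b a) = a :=
  @BraceData.J3_lem _ (muGroup HB.fst hA hR) (muBrace HB hA hR) a b

lemma mu_J4 (a b : MU k A R) :
    muVV HB hA hR (muLam HB hA hR a b) (muRho HB hA hR b a) = b :=
  @BraceData.J4_lem _ (muGroup HB.fst hA hR) (muBrace HB hA hR) a b

/-- substitution of an algebra morphism into a `lam`-word. -/
lemma subst_lam {N : R →ₗ[k] R} (hN : ∀ u v : R, N (u * v) = N u * N v)
    {a b a' b' : MU k A R}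
    (ha : N ∘ₗ a.1 = a'.1) (hb : N ∘ₗ b.1 = b'.1) :
    N ∘ₗ (muLam HB hA hR a b).1 = (muLam HB hA hR a' b').1 := by
  rw [muLam_val, muLam_val, conv_postcomp _ N hN, conv_postcomp _ N hN,
    ← LinearMap.comp_assoc, ha, hb]

lemma subst_rho {N : R →ₗ[k] R} (hN : ∀ u v : R, N (u * v) = N u * N v)
    {a b a' b' : MU k A R}
    (ha : N ∘ₗ a.1 = a'.1) (hb : N ∘ₗ b.1 = b'.1) :
    N ∘ₗ (muRho HB hA hR b a).1 = (muRho HB hA hR b' a').1 := by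
  rw [muRho_val, muRho_val, conv_postcomp _ N hN, conv_postcomp _ N hN,
    ← LinearMap.comp_assoc, subst_lam HB hA hR hN ha hb, ha, hb]

lemma subst_uu {N : R →ₗ[k] R} (hN : ∀ u v : R, N (u * v) = N u * N v)
    {p q p' q' : MU k A R}
    (hp : N ∘ₗ p.1 = p'.1) (hq : N ∘ₗ q.1 = q'.1) :
    N ∘ₗ (muUU HB hA hR p q).1 = (muUU HB hA hR p' q').1 := by
  rw [muUU_val, muUU_val, conv_postcomp _ N hN, conv_postcomp _ N hN,
    ← LinearMap.comp_assoc, hp, hq]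

lemma subst_vv {N : R →ₗ[k] R} (hN : ∀ u v : R, N (u * v) = N u * N v)
    {p q p' q' : MU k A R}
    (hp : N ∘ₗ p.1 = p'.1) (hq : N ∘ₗ q.1 = q'.1) :
    N ∘ₗ (muVV HB hA hR p q).1 = (muVV HB hA hR p' q').1 := by
  rw [muVV_val, muVV_val, conv_postcomp _ N hN, conv_postcomp _ N hN,
    ← LinearMap.comp_assoc, subst_uu HB hA hR hN hp hq, hp, hq]

end Words

section RhoPhiWords

variable {k}
variable {A : Type*} [Ring A] [Algebra k A]
variable (HB : HopfBrace k A)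
variable (hA : ∀ x y : A, x * y = y * x)

lemma mulmap_id :
    LinearMap.mul' k (A ⊗[k] A) ∘ₗ TensorProduct.map (ι₁ k A A) (ι₂ k A A)
      = LinearMap.id := by
  apply TensorProduct.ext'
  intro x y
  simp

lemma Δ'_conv :
    conv HB.snd.Δ (ι₁ k A A) (ι₂ k A A) = HB.snd.Δ := by
  apply LinearMap.ext; intro x
  rw [conv_apply, ← LinearMap.comp_apply, mulmap_id]
  rfl

lemma rho_conv :
    ρmap k A HB.fst.Δ HB.snd.Δ HB.fst.S
      = conv HB.fst.Δ (ι₁ k A A ∘ₗ HB.fst.S)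
          (conv HB.snd.Δ (ι₁ k A A) (ι₂ k A A)) := by
  rw [Δ'_conv]
  rfl

lemma phi_conv :
    φmap k A HB.fst.Δ HB.snd.Δ HB.fst.S HB.snd.S
      = conv HB.snd.Δ (ρmap k A HB.fst.Δ HB.snd.Δ HB.fst.S ∘ₗ HB.snd.S)
          (conv HB.snd.Δ (ι₁ k A A) (ι₂ k A A)) := by
  rw [Δ'_conv]
  apply LinearMap.ext; intro x
  rw [conv_apply]
  simp only [φmap, LinearMap.comp_apply]
  rw [map_split (ρmap k A HB.fst.Δ HB.snd.Δ HB.fst.S ∘ₗ HB.snd.S) HB.snd.Δ]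
  rfl

/-- hA-dependent : the two `MU (A⊗A)`-generators. -/
def genE₁ : MU k A (A ⊗[k] A) := ⟨ι₁ k A A, isAlgMor_ι₁⟩

def genE₂ : MU k A (A ⊗[k] A) := ⟨ι₂ k A A, isAlgMor_ι₂⟩

lemma rho_word (hAA : ∀ u v : A ⊗[k] A, u * v = v * u) :
    ρmap k A HB.fst.Δ HB.snd.Δ HB.fst.S
      = (muLam HB hA hAA genE₁ genE₂).1 := by
  rw [muLam_val, rho_conv]
  rfl

lemma phi_word (hAA : ∀ u v : A ⊗[k] A, u * v = v * u) :
    φmap k A HB.fst.Δ HB.snd.Δ HB.fst.S HB.snd.S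
      = (muRho HB hA hAA genE₂ genE₁).1 := by
  rw [muRho_val, phi_conv, ← rho_word HB hA hAA]
  rfl

end RhoPhiWords

section Tmap2

variable {k}
variable {A : Type*} [Ring A] [Algebra k A]

/-- two–leg evaluation map. -/
def Tmap2 (F G : A →ₗ[k] A ⊗[k] A) : A ⊗[k] A →ₗ[k] A ⊗[k] A :=
  LinearMap.mul' k (A ⊗[k] A) ∘ₗ TensorProduct.map F G

lemma Tmap2_tmul (F G : A →ₗ[k] A ⊗[k] A) (x y : A) :
    Tmap2 F G (x ⊗ₜ y) = F x * G y := rfl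

lemma Tmap2_isAlgMor (hAA : ∀ u v : A ⊗[k] A, u * v = v * u)
    {F G : A →ₗ[k] A ⊗[k] A}
    (hF : IsAlgebraMorphism k A (A ⊗[k] A) F)
    (hG : IsAlgebraMorphism k A (A ⊗[k] A) G) :
    IsAlgebraMorphism k (A ⊗[k] A) (A ⊗[k] A) (Tmap2 F G) :=
  isAlgMor_comp (isAlgMor_map hF hG) (isAlgMor_mul' hAA)

lemma Tmap2_comp {F G F' G' : A →ₗ[k] A ⊗[k] A}
    (hN : ∀ u v : A ⊗[k] A, Tmap2 F G (u * v) = Tmap2 F G u * Tmap2 F G v) :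
    Tmap2 F G ∘ₗ Tmap2 F' G'
      = Tmap2 (Tmap2 F G ∘ₗ F') (Tmap2 F G ∘ₗ G') := by
  apply TensorProduct.ext'
  intro x y
  simp only [LinearMap.comp_apply, Tmap2_tmul]
  rw [hN]

lemma Tmap2_comp_ι₁ {F G : A →ₗ[k] A ⊗[k] A} (hG : G 1 = 1) :
    Tmap2 F G ∘ₗ ι₁ k A A = F := by
  apply LinearMap.ext; intro x
  simp only [LinearMap.comp_apply, ι₁_apply, Tmap2_tmul, hG, mul_one]

lemma Tmap2_comp_ι₂ {F G : A →ₗ[k] A ⊗[k] A} (hF : F 1 = 1) :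
    Tmap2 F G ∘ₗ ι₂ k A A = G := by
  apply LinearMap.ext; intro x
  simp only [LinearMap.comp_apply, ι₂_apply, Tmap2_tmul, hF, one_mul]

lemma Tmap2_gen : Tmap2 (ι₁ k A A) (ι₂ k A A) = LinearMap.id :=
  mulmap_id

end Tmap2

section Bijective

variable {k}
variable {A : Type*} [Ring A] [Algebra k A]
variable (HB : HopfBrace k A)

lemma cmap_bijective (hA : ∀ x y : A, x * y = y * x) :
    Function.Bijective (cmap k A HB.fst.Δ HB.snd.Δ HB.fst.S HB.snd.S) := by
  have hAA : ∀ u v : A ⊗[k] A, u * v = v * u := tensor_comm_mul hA hA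
  set X := genE₁ (k := k) (A := A) with hX
  set Y := genE₂ (k := k) (A := A) with hY
  have hc : cmap k A HB.fst.Δ HB.snd.Δ HB.fst.S HB.snd.S
      = Tmap2 (muLam HB hA hAA X Y).1 (muRho HB hA hAA Y X).1 := by
    rw [cmap, ← rho_word HB hA hAA, ← phi_word HB hA hAA]
    rfl
  set cinv : A ⊗[k] A →ₗ[k] A ⊗[k] A :=
    Tmap2 (muUU HB hA hAA X Y).1 (muVV HB hA hAA X Y).1 with hcinv
  have hcmor := Tmap2_isAlgMor hAA (muLam HB hA hAA X Y).2 (muRho HB hA hAA Y X).2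
  have hcinvmor := Tmap2_isAlgMor hAA (muUU HB hA hAA X Y).2 (muVV HB hA hAA X Y).2
  have hXval : Tmap2 (muLam HB hA hAA X Y).1 (muRho HB hA hAA Y X).1 ∘ₗ X.1
      = (muLam HB hA hAA X Y).1 := Tmap2_comp_ι₁ (muRho HB hA hAA Y X).2.2
  have hYval : Tmap2 (muLam HB hA hAA X Y).1 (muRho HB hA hAA Y X).1 ∘ₗ Y.1
      = (muRho HB hA hAA Y X).1 := Tmap2_comp_ι₂ (muLam HB hA hAA X Y).2.2
  have hXinv : cinv ∘ₗ X.1 = (muUU HB hA hAA X Y).1 :=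
    Tmap2_comp_ι₁ (muVV HB hA hAA X Y).2.2
  have hYinv : cinv ∘ₗ Y.1 = (muVV HB hA hAA X Y).1 :=
    Tmap2_comp_ι₂ (muUU HB hA hAA X Y).2.2
  have left : cinv ∘ₗ cmap k A HB.fst.Δ HB.snd.Δ HB.fst.S HB.snd.S
      = LinearMap.id := by
    rw [hc, hcinv, Tmap2_comp hcinvmor.1]
    rw [subst_lam HB hA hAA hcinvmor.1 hXinv hYinv,
        subst_rho HB hA hAA hcinvmor.1 hXinv hYinv,
        mu_J1, mu_J2]
    exact Tmap2_gen
  have right : cmap k A HB.fst.Δ HB.snd.Δ HB.fst.S HB.snd.S ∘ₗ cinv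
      = LinearMap.id := by
    rw [hc, hcinv, Tmap2_comp hcmor.1]
    rw [subst_uu HB hA hAA hcmor.1 hXval hYval,
        subst_vv HB hA hAA hcmor.1 hXval hYval,
        mu_J3, mu_J4]
    exact Tmap2_gen
  refine Function.bijective_iff_has_inverse.mpr ⟨cinv, ?_, ?_⟩
  · intro z
    exact LinearMap.congr_fun left z
  · intro z
    exact LinearMap.congr_fun right z

end Bijective




set_option maxHeartbeats 1000000


section Tmap3

variable {k : Type*} [Field k]
variable {A : Type*} [Ring A] [Algebra k A]

/-- three–leg evaluation map on `(A ⊗ A) ⊗ A`. -/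
def Tmap3 (F G H : A →ₗ[k] (A ⊗[k] A) ⊗[k] A) :
    (A ⊗[k] A) ⊗[k] A →ₗ[k] (A ⊗[k] A) ⊗[k] A :=
  LinearMap.mul' k ((A ⊗[k] A) ⊗[k] A) ∘ₗ
    TensorProduct.map
      (LinearMap.mul' k ((A ⊗[k] A) ⊗[k] A) ∘ₗ TensorProduct.map F G) H

lemma Tmap3_tmul (F G H : A →ₗ[k] (A ⊗[k] A) ⊗[k] A) (x y z : A) :
    Tmap3 F G H ((x ⊗ₜ y) ⊗ₜ z) = F x * G y * H z := rfl

lemma Tmap3_isAlgMor (hP : ∀ u v : (A ⊗[k] A) ⊗[k] A, u * v = v * u)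
    {F G H : A →ₗ[k] (A ⊗[k] A) ⊗[k] A}
    (hF : IsAlgebraMorphism k A _ F) (hG : IsAlgebraMorphism k A _ G)
    (hH : IsAlgebraMorphism k A _ H) :
    IsAlgebraMorphism k ((A ⊗[k] A) ⊗[k] A) ((A ⊗[k] A) ⊗[k] A) (Tmap3 F G H) :=
  isAlgMor_comp
    (isAlgMor_map (isAlgMor_comp (isAlgMor_map hF hG) (isAlgMor_mul' hP)) hH)
    (isAlgMor_mul' hP)

lemma Tmap3_comp {F G H F' G' H' : A →ₗ[k] (A ⊗[k] A) ⊗[k] A}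
    (hN : ∀ u v : (A ⊗[k] A) ⊗[k] A,
      Tmap3 F G H (u * v) = Tmap3 F G H u * Tmap3 F G H v) :
    Tmap3 F G H ∘ₗ Tmap3 F' G' H'
      = Tmap3 (Tmap3 F G H ∘ₗ F') (Tmap3 F G H ∘ₗ G') (Tmap3 F G H ∘ₗ H') := by
  apply TensorProduct.ext_threefold
  intro x y z
  simp only [LinearMap.comp_apply, Tmap3_tmul]
  rw [hN, hN]

def e1m : A →ₗ[k] (A ⊗[k] A) ⊗[k] A := ι₁ k (A ⊗[k] A) A ∘ₗ ι₁ k A A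

def e2m : A →ₗ[k] (A ⊗[k] A) ⊗[k] A := ι₁ k (A ⊗[k] A) A ∘ₗ ι₂ k A A

def e3m : A →ₗ[k] (A ⊗[k] A) ⊗[k] A := ι₂ k (A ⊗[k] A) A

lemma e1m_apply (x : A) : (e1m : A →ₗ[k] _) x = (x ⊗ₜ 1) ⊗ₜ 1 := rfl
lemma e2m_apply (x : A) : (e2m : A →ₗ[k] _) x = ((1 : A) ⊗ₜ x) ⊗ₜ 1 := rfl
lemma e3m_apply (x : A) : (e3m : A →ₗ[k] _) x = (1 : A ⊗[k] A) ⊗ₜ x := rfl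

lemma e1m_mor : IsAlgebraMorphism k A ((A ⊗[k] A) ⊗[k] A) (e1m : A →ₗ[k] _) :=
  isAlgMor_comp isAlgMor_ι₁ isAlgMor_ι₁

lemma e2m_mor : IsAlgebraMorphism k A ((A ⊗[k] A) ⊗[k] A) (e2m : A →ₗ[k] _) :=
  isAlgMor_comp isAlgMor_ι₂ isAlgMor_ι₁

lemma e3m_mor : IsAlgebraMorphism k A ((A ⊗[k] A) ⊗[k] A) (e3m : A →ₗ[k] _) :=
  isAlgMor_ι₂

lemma Tmap3_comp_e1 {F G H : A →ₗ[k] (A ⊗[k] A) ⊗[k] A}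
    (hG : G 1 = 1) (hH : H 1 = 1) : Tmap3 F G H ∘ₗ e1m = F := by
  apply LinearMap.ext; intro x
  simp only [LinearMap.comp_apply, e1m_apply, Tmap3_tmul, hG, hH, mul_one]

lemma Tmap3_comp_e2 {F G H : A →ₗ[k] (A ⊗[k] A) ⊗[k] A}
    (hF : F 1 = 1) (hH : H 1 = 1) : Tmap3 F G H ∘ₗ e2m = G := by
  apply LinearMap.ext; intro x
  simp only [LinearMap.comp_apply, e2m_apply, Tmap3_tmul, hF, hH, one_mul, mul_one]

lemma Tmap3_comp_e3 {F G H : A →ₗ[k] (A ⊗[k] A) ⊗[k] A}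
    (hF : F 1 = 1) (hG : G 1 = 1) : Tmap3 F G H ∘ₗ e3m = H := by
  apply LinearMap.ext; intro x
  have he : (e3m : A →ₗ[k] _) x = ((1 : A) ⊗ₜ[k] (1 : A)) ⊗ₜ[k] x := by
    rw [e3m_apply, Algebra.TensorProduct.one_def]
  rw [LinearMap.comp_apply, he, Tmap3_tmul, hF, hG, one_mul, one_mul]

end Tmap3

section Braid

variable {k : Type*} [Field k]
variable {A : Type*} [Ring A] [Algebra k A]
variable (HB : HopfBrace k A)

/-- first braid factor `c ⊗ id`. -/
def M1map : (A ⊗[k] A) ⊗[k] A →ₗ[k] (A ⊗[k] A) ⊗[k] A :=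
  TensorProduct.map (cmap k A HB.fst.Δ HB.snd.Δ HB.fst.S HB.snd.S) LinearMap.id

/-- second braid factor `id ⊗ c` (conjugated by the associator). -/
def M2map : (A ⊗[k] A) ⊗[k] A →ₗ[k] (A ⊗[k] A) ⊗[k] A :=
  (TensorProduct.assoc k A A A).symm.toLinearMap
    ∘ₗ TensorProduct.map LinearMap.id (cmap k A HB.fst.Δ HB.snd.Δ HB.fst.S HB.snd.S)
    ∘ₗ (TensorProduct.assoc k A A A).toLinearMap

lemma jmap_comp_E1 :
    (ι₁ k (A ⊗[k] A) A) ∘ₗ (ι₁ k A A) = (e1m : A →ₗ[k] _) := rfl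

lemma jmap_comp_E2 :
    (ι₁ k (A ⊗[k] A) A) ∘ₗ (ι₂ k A A) = (e2m : A →ₗ[k] _) := rfl

def jhat : A ⊗[k] A →ₗ[k] (A ⊗[k] A) ⊗[k] A :=
  (TensorProduct.assoc k A A A).symm.toLinearMap ∘ₗ ι₂ k A (A ⊗[k] A)

lemma jhat_mor : IsAlgebraMorphism k (A ⊗[k] A) ((A ⊗[k] A) ⊗[k] A)
    (jhat : A ⊗[k] A →ₗ[k] _) :=
  isAlgMor_comp isAlgMor_ι₂ isAlgMor_assoc_symm

lemma jhat_comp_E1 : (jhat : A ⊗[k] A →ₗ[k] _) ∘ₗ (ι₁ k A A) = (e2m : A →ₗ[k] _) := by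
  apply LinearMap.ext; intro x
  simp only [LinearMap.comp_apply, ι₁_apply, jhat, ι₂_apply, e2m_apply,
    LinearEquiv.coe_coe, TensorProduct.assoc_symm_tmul]

lemma jhat_comp_E2 : (jhat : A ⊗[k] A →ₗ[k] _) ∘ₗ (ι₂ k A A) = (e3m : A →ₗ[k] _) := by
  apply LinearMap.ext; intro x
  simp only [LinearMap.comp_apply, ι₂_apply, jhat, e3m_apply,
    LinearEquiv.coe_coe, TensorProduct.assoc_symm_tmul,
    Algebra.TensorProduct.one_def]

variable (hA : ∀ x y : A, x * y = y * x)

lemma M1_eq :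
    M1map HB = Tmap3 (ι₁ k (A ⊗[k] A) A ∘ₗ ρmap k A HB.fst.Δ HB.snd.Δ HB.fst.S)
      (ι₁ k (A ⊗[k] A) A ∘ₗ φmap k A HB.fst.Δ HB.snd.Δ HB.fst.S HB.snd.S)
      e3m := by
  apply TensorProduct.ext_threefold
  intro x y z
  simp only [M1map, Tmap3_tmul, TensorProduct.map_tmul, LinearMap.id_coe, id_eq,
    LinearMap.comp_apply, ι₁_apply, e3m_apply, cmap,
    LinearMap.mul'_apply, Algebra.TensorProduct.tmul_mul_tmul, mul_one, one_mul]

lemma M2_eq :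
    M2map HB = Tmap3 e1m
      (jhat ∘ₗ ρmap k A HB.fst.Δ HB.snd.Δ HB.fst.S)
      (jhat ∘ₗ φmap k A HB.fst.Δ HB.snd.Δ HB.fst.S HB.snd.S) := by
  have hsm := (isAlgMor_assoc_symm (k := k) (M := A) (N := A) (R := A)).1
  simp only [LinearEquiv.coe_coe] at hsm
  apply TensorProduct.ext_threefold
  intro x y z
  simp only [M2map, Tmap3_tmul, TensorProduct.map_tmul, LinearMap.id_coe, id_eq,
    LinearMap.comp_apply, LinearEquiv.coe_coe, TensorProduct.assoc_tmul,
    jhat, ι₂_apply, e1m_apply, cmap, LinearMap.mul'_apply]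
  have h1 : ((x ⊗ₜ (1 : A)) ⊗ₜ (1 : A) : (A ⊗[k] A) ⊗[k] A)
      = (TensorProduct.assoc k A A A).symm
          (x ⊗ₜ (1 : A ⊗[k] A)) := by
    simp [Algebra.TensorProduct.one_def]
  rw [h1, ← hsm, ← hsm]
  congr 1
  rw [Algebra.TensorProduct.tmul_mul_tmul, Algebra.TensorProduct.tmul_mul_tmul]
  simp

lemma hPcomm (hA : ∀ x y : A, x * y = y * x) :
    ∀ u v : (A ⊗[k] A) ⊗[k] A, u * v = v * u :=
  tensor_comm_mul (tensor_comm_mul hA hA) hA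

def X3 : MU k A ((A ⊗[k] A) ⊗[k] A) := ⟨e1m, e1m_mor⟩
def Y3 : MU k A ((A ⊗[k] A) ⊗[k] A) := ⟨e2m, e2m_mor⟩
def Z3 : MU k A ((A ⊗[k] A) ⊗[k] A) := ⟨e3m, e3m_mor⟩

lemma jrho_word :
    ι₁ k (A ⊗[k] A) A ∘ₗ ρmap k A HB.fst.Δ HB.snd.Δ HB.fst.S
      = (muLam HB hA (hPcomm hA) X3 Y3).1 := by
  rw [rho_conv, muLam_val]
  rw [conv_postcomp _ _ isAlgMor_ι₁.1, conv_postcomp _ _ isAlgMor_ι₁.1,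
    ← LinearMap.comp_assoc, jmap_comp_E1, jmap_comp_E2]
  rfl

lemma jphi_word :
    ι₁ k (A ⊗[k] A) A ∘ₗ φmap k A HB.fst.Δ HB.snd.Δ HB.fst.S HB.snd.S
      = (muRho HB hA (hPcomm hA) Y3 X3).1 := by
  rw [phi_conv, muRho_val]
  rw [conv_postcomp _ _ isAlgMor_ι₁.1, conv_postcomp _ _ isAlgMor_ι₁.1,
    ← LinearMap.comp_assoc, jrho_word HB hA, jmap_comp_E1, jmap_comp_E2]
  rfl

lemma jhrho_word :
    (jhat : A ⊗[k] A →ₗ[k] _) ∘ₗ ρmap k A HB.fst.Δ HB.snd.Δ HB.fst.S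
      = (muLam HB hA (hPcomm hA) Y3 Z3).1 := by
  rw [rho_conv, muLam_val]
  rw [conv_postcomp _ _ jhat_mor.1, conv_postcomp _ _ jhat_mor.1,
    ← LinearMap.comp_assoc, jhat_comp_E1, jhat_comp_E2]
  rfl

lemma jhphi_word :
    (jhat : A ⊗[k] A →ₗ[k] _) ∘ₗ φmap k A HB.fst.Δ HB.snd.Δ HB.fst.S HB.snd.S
      = (muRho HB hA (hPcomm hA) Z3 Y3).1 := by
  rw [phi_conv, muRho_val]
  rw [conv_postcomp _ _ jhat_mor.1, conv_postcomp _ _ jhat_mor.1,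
    ← LinearMap.comp_assoc, jhrho_word HB hA, jhat_comp_E1, jhat_comp_E2]
  rfl

lemma braid_eq (hA : ∀ x y : A, x * y = y * x) :
    M1map HB ∘ₗ M2map HB ∘ₗ M1map HB = M2map HB ∘ₗ M1map HB ∘ₗ M2map HB := by
  have hP := hPcomm (k := k) (A := A) hA
  set X := (X3 : MU k A ((A ⊗[k] A) ⊗[k] A)) with hX
  set Y := (Y3 : MU k A ((A ⊗[k] A) ⊗[k] A)) with hY
  set Z := (Z3 : MU k A ((A ⊗[k] A) ⊗[k] A)) with hZ
  have hM1 : M1map HB = Tmap3 (muLam HB hA hP X Y).1 (muRho HB hA hP Y X).1 Z.1 := by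
    rw [M1_eq, jrho_word HB hA, jphi_word HB hA]; rfl
  have hM2 : M2map HB = Tmap3 X.1 (muLam HB hA hP Y Z).1 (muRho HB hA hP Z Y).1 := by
    rw [M2_eq, jhrho_word HB hA, jhphi_word HB hA]; rfl
  have hM1mor := Tmap3_isAlgMor hP (muLam HB hA hP X Y).2 (muRho HB hA hP Y X).2 Z.2
  rw [← hM1] at hM1mor
  have hM2mor := Tmap3_isAlgMor hP X.2 (muLam HB hA hP Y Z).2 (muRho HB hA hP Z Y).2
  rw [← hM2] at hM2mor
  -- images of generators
  have hM1X : M1map HB ∘ₗ X.1 = (muLam HB hA hP X Y).1 := by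
    rw [hM1]; exact Tmap3_comp_e1 (muRho HB hA hP Y X).2.2 Z.2.2
  have hM1Y : M1map HB ∘ₗ Y.1 = (muRho HB hA hP Y X).1 := by
    rw [hM1]; exact Tmap3_comp_e2 (muLam HB hA hP X Y).2.2 Z.2.2
  have hM1Z : M1map HB ∘ₗ Z.1 = Z.1 := by
    rw [hM1]; exact Tmap3_comp_e3 (muLam HB hA hP X Y).2.2 (muRho HB hA hP Y X).2.2
  have hM2X : M2map HB ∘ₗ X.1 = X.1 := by
    rw [hM2]; exact Tmap3_comp_e1 (muLam HB hA hP Y Z).2.2 (muRho HB hA hP Z Y).2.2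
  have hM2Y : M2map HB ∘ₗ Y.1 = (muLam HB hA hP Y Z).1 := by
    rw [hM2]; exact Tmap3_comp_e2 X.2.2 (muRho HB hA hP Z Y).2.2
  have hM2Z : M2map HB ∘ₗ Z.1 = (muRho HB hA hP Z Y).1 := by
    rw [hM2]; exact Tmap3_comp_e3 X.2.2 (muLam HB hA hP Y Z).2.2
  -- composition as substitution
  have hN2 := (Tmap3_isAlgMor hP X.2 (muLam HB hA hP Y Z).2 (muRho HB hA hP Z Y).2).1
  have hN1 := (Tmap3_isAlgMor hP (muLam HB hA hP X Y).2 (muRho HB hA hP Y X).2 Z.2).1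
  have step1 : M2map HB ∘ₗ M1map HB
      = Tmap3 (muLam HB hA hP X (muLam HB hA hP Y Z)).1
          (muRho HB hA hP (muLam HB hA hP Y Z) X).1
          (muRho HB hA hP Z Y).1 := by
    conv_lhs => rw [hM2, hM1]
    rw [Tmap3_comp hN2, ← hM2]
    rw [subst_lam HB hA hP hM2mor.1 hM2X hM2Y,
      subst_rho HB hA hP hM2mor.1 hM2X hM2Y, hM2Z]
  have step1' : M1map HB ∘ₗ M2map HB
      = Tmap3 (muLam HB hA hP X Y).1
          (muLam HB hA hP (muRho HB hA hP Y X) Z).1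
          (muRho HB hA hP Z (muRho HB hA hP Y X)).1 := by
    conv_lhs => rw [hM1, hM2]
    rw [Tmap3_comp hN1, ← hM1]
    rw [hM1X, subst_lam HB hA hP hM1mor.1 hM1Y hM1Z,
      subst_rho HB hA hP hM1mor.1 hM1Y hM1Z]
  have hlhs : M1map HB ∘ₗ M2map HB ∘ₗ M1map HB
      = Tmap3 (muLam HB hA hP (muLam HB hA hP X Y)
            (muLam HB hA hP (muRho HB hA hP Y X) Z)).1
          (muRho HB hA hP (muLam HB hA hP (muRho HB hA hP Y X) Z)
            (muLam HB hA hP X Y)).1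
          (muRho HB hA hP Z (muRho HB hA hP Y X)).1 := by
    rw [step1]
    conv_lhs => rw [hM1]
    rw [Tmap3_comp hN1, ← hM1]
    rw [subst_lam HB hA hP hM1mor.1 hM1X
        (subst_lam HB hA hP hM1mor.1 hM1Y hM1Z),
      subst_rho HB hA hP hM1mor.1 hM1X
        (subst_lam HB hA hP hM1mor.1 hM1Y hM1Z),
      subst_rho HB hA hP hM1mor.1 hM1Y hM1Z]
  have hrhs : M2map HB ∘ₗ M1map HB ∘ₗ M2map HB
      = Tmap3 (muLam HB hA hP X (muLam HB hA hP Y Z)).1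
          (muLam HB hA hP (muRho HB hA hP (muLam HB hA hP Y Z) X)
            (muRho HB hA hP Z Y)).1
          (muRho HB hA hP (muRho HB hA hP Z Y)
            (muRho HB hA hP (muLam HB hA hP Y Z) X)).1 := by
    rw [step1']
    conv_lhs => rw [hM2]
    rw [Tmap3_comp hN2, ← hM2]
    rw [subst_lam HB hA hP hM2mor.1 hM2X hM2Y,
      subst_lam HB hA hP hM2mor.1
        (subst_rho HB hA hP hM2mor.1 hM2X hM2Y) hM2Z,
      subst_rho HB hA hP hM2mor.1
        (subst_rho HB hA hP hM2mor.1 hM2X hM2Y) hM2Z]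
  rw [hlhs, hrhs,
    congrArg Subtype.val (mu_I HB hA hP X Y Z),
    congrArg Subtype.val (mu_II HB hA hP X Y Z),
    congrArg Subtype.val (mu_III HB hA hP X Y Z)]

end Braid

/-- Proposition 2.9.  Let `(A, Δ, Δ')` be a commutative Hopf
brace, with `ρ(x) = S(x_1) x_{21'} ⊗ x_{22'}` and
`φ(y) = (T(y_{1'}))_{(-1)} y_{2'} ⊗ (T(y_{1'}))_{(0)} y_{3'}`.  Then the linear
map `c : A ⊗ A → A ⊗ A`, `c(x ⊗ y) = x_{(-1)} y_{[0]} ⊗ x_{(0)} y_{[1]}`, is an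
invertible solution of the braid equation
`(c ⊗ id)(id ⊗ c)(c ⊗ id) = (id ⊗ c)(c ⊗ id)(id ⊗ c)` on `A ⊗ A ⊗ A`. -/
theorem proposition_2_9 {k : Type*} [Field k] {A : Type*} [Ring A] [Algebra k A]
    (HB : HopfBrace k A) (hcomm : ∀ x y : A, x * y = y * x) :
    Function.Bijective
      (cmap k A HB.fst.Δ HB.snd.Δ HB.fst.S HB.snd.S) ∧
    (∀ z : (A ⊗[k] A) ⊗[k] A,
      TensorProduct.map (cmap k A HB.fst.Δ HB.snd.Δ HB.fst.S HB.snd.S)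
          (LinearMap.id : A →ₗ[k] A)
        ((TensorProduct.assoc k A A A).symm
          (TensorProduct.map (LinearMap.id : A →ₗ[k] A)
              (cmap k A HB.fst.Δ HB.snd.Δ HB.fst.S HB.snd.S)
            (TensorProduct.assoc k A A A
              (TensorProduct.map (cmap k A HB.fst.Δ HB.snd.Δ HB.fst.S HB.snd.S)
                (LinearMap.id : A →ₗ[k] A) z))))
      = (TensorProduct.assoc k A A A).symm
          (TensorProduct.map (LinearMap.id : A →ₗ[k] A)
              (cmap k A HB.fst.Δ HB.snd.Δ HB.fst.S HB.snd.S)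
            (TensorProduct.assoc k A A A
              (TensorProduct.map (cmap k A HB.fst.Δ HB.snd.Δ HB.fst.S HB.snd.S)
                  (LinearMap.id : A →ₗ[k] A)
                ((TensorProduct.assoc k A A A).symm
                  (TensorProduct.map (LinearMap.id : A →ₗ[k] A)
                      (cmap k A HB.fst.Δ HB.snd.Δ HB.fst.S HB.snd.S)
                    (TensorProduct.assoc k A A A z))))))) := by
  constructor
  · exact cmap_bijective HB hcomm
  · intro z
    have h := LinearMap.congr_fun (braid_eq HB hcomm) z
    simpa only [M1map, M2map, LinearMap.comp_apply, LinearEquiv.coe_coe] using h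


end HopfPaper
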